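/- arXiv:2603.19554 — 9 statements merged into one kernel-verified Lean document; each statement's English description precedes it below -/
import Mathlib

section
/- The set of Parry numbers that are not simple Parry numbers is dense in (1, ∞): for all real numbers u, v with 1 < u < v, there exists a real β with u < β < v such that β is a Parry number but not a simple Parry number. -/
/-- The β-transformation `x ↦ βx - ⌊βx⌋`. -/
noncomputable def betaT (β : ℝ) (x : ℝ) : ℝ := β * x - ⌊β * x⌋

/-- `β` is a Parry number: `β > 1` and the forward orbit of `1` under the
β-transformation is finite. -/
def IsParry (β : ℝ) : Prop :=
  1 < β ∧ Set.Finite {x : ℝ | ∃ n : ℕ, 1 ≤ n ∧ (betaT β)^[n] 1 = x}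

/-- `β` is a simple Parry number: Parry, and the orbit of `1` hits `0`. -/
def IsSimpleParry (β : ℝ) : Prop :=
  IsParry β ∧ ∃ n : ℕ, 1 ≤ n ∧ (betaT β)^[n] 1 = 0

/-- `β` is a Perron number: a real algebraic integer `β > 1` all of whose Galois
conjugates other than `β` itself have complex absolute value `< β`. -/
def IsPerron (β : ℝ) : Prop :=
  1 < β ∧ IsIntegral ℤ β ∧
    ∀ z : ℂ, Polynomial.aeval z (minpoly ℚ β) = 0 → z ≠ (β : ℂ) → ‖z‖ < β

/-- `β` is a Pisot number. -/
def IsPisot (β : ℝ) : Prop :=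
  1 < β ∧ IsIntegral ℤ β ∧
    ∀ z : ℂ, Polynomial.aeval z (minpoly ℚ β) = 0 → z ≠ (β : ℂ) → ‖z‖ < 1

/-- `β` is a Salem number. -/
def IsSalem (β : ℝ) : Prop :=
  1 < β ∧ IsIntegral ℤ β ∧
    (∀ z : ℂ, Polynomial.aeval z (minpoly ℚ β) = 0 → z ≠ (β : ℂ) → ‖z‖ ≤ 1) ∧
    (∃ z : ℂ, Polynomial.aeval z (minpoly ℚ β) = 0 ∧ ‖z‖ = 1)

/-- `β` has Parry order exactly `n`: if `n ≥ 1` then `β ^ n` is Parry, and no higher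
power of `β` is Parry. -/
def HasParryOrder (β : ℝ) (n : ℕ) : Prop :=
  (1 ≤ n → IsParry (β ^ n)) ∧ ∀ k : ℕ, n < k → ¬ IsParry (β ^ k)

/-- Mahler measure of an algebraic number `β`: product of `max 1 |α|` over the complex
roots `α` of the minimal polynomial of `β` over `ℚ`. -/
noncomputable def mahlerMeasureOf (β : ℝ) : ℝ :=
  (((minpoly ℚ β).map (algebraMap ℚ ℂ)).roots.map (fun z => max 1 (‖z‖))).prod
namespace NSP

/-- orbit of 1 under the β-transformation -/
noncomputable def orb (β : ℝ) (j : ℕ) : ℝ := (betaT β)^[j] 1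

/-- the (j+1)-st greedy digit of β -/
noncomputable def dig (β : ℝ) (j : ℕ) : ℤ := ⌊β * orb β j⌋

/-- the polynomial functions `t_j(x)` built from the digits of β -/
noncomputable def P (β : ℝ) : ℕ → ℝ → ℝ
  | 0, _ => 1
  | j+1, x => x * P β j x - dig β j

@[simp] lemma orb_zero (β : ℝ) : orb β 0 = 1 := rfl

lemma orb_succ (β : ℝ) (j : ℕ) : orb β (j+1) = Int.fract (β * orb β j) := by
  rw [orb, Function.iterate_succ_apply']
  rfl

lemma orb_nonneg (β : ℝ) (j : ℕ) : 0 ≤ orb β j := by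
  cases j with
  | zero => norm_num
  | succ j => rw [orb_succ]; exact Int.fract_nonneg _

lemma orb_lt_one (β : ℝ) (j : ℕ) : orb β (j+1) < 1 := by
  rw [orb_succ]; exact Int.fract_lt_one _

lemma dig_nonneg {β : ℝ} (hβ : 0 < β) (j : ℕ) : 0 ≤ dig β j :=
  Int.floor_nonneg.2 (mul_nonneg hβ.le (orb_nonneg β j))

lemma P_self (β : ℝ) (j : ℕ) : P β j β = orb β j := by
  induction j with
  | zero => rfl
  | succ j ih =>
    rw [orb_succ]
    show β * P β j β - dig β j = _
    rw [ih, Int.fract, dig]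

lemma P_cont (β : ℝ) (j : ℕ) : Continuous (fun x => P β j x) := by
  induction j with
  | zero => exact continuous_const
  | succ j ih =>
    show Continuous (fun x => x * P β j x - (dig β j : ℝ))
    exact (continuous_id.mul ih).sub continuous_const

/-- the integer polynomial whose evaluation is `P β j` -/
noncomputable def Q (β : ℝ) : ℕ → Polynomial ℤ
  | 0 => 1
  | j+1 => Polynomial.X * Q β j - Polynomial.C (dig β j)

lemma Q_monic (β : ℝ) (j : ℕ) : (Q β j).Monic ∧ (Q β j).natDegree = j := by
  induction j with
  | zero => exact ⟨Polynomial.monic_one, Polynomial.natDegree_one⟩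
  | succ j ih =>
    have hm : (Polynomial.X * Q β j).Monic := Polynomial.monic_X.mul ih.1
    have hd : (Polynomial.X * Q β j).natDegree = j + 1 := by
      rw [Polynomial.natDegree_mul Polynomial.X_ne_zero ih.1.ne_zero,
        Polynomial.natDegree_X, ih.2, add_comm]
    have hlt : (Polynomial.C (dig β j)).degree < (Polynomial.X * Q β j).degree := by
      rw [Polynomial.degree_eq_natDegree hm.ne_zero, hd]
      exact lt_of_le_of_lt Polynomial.degree_C_le (by exact_mod_cast WithBot.coe_lt_coe.2 (Nat.succ_pos j))
    constructor
    · show (Polynomial.X * Q β j - Polynomial.C (dig β j)).Monic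
      exact hm.sub_of_left hlt
    · show (Polynomial.X * Q β j - Polynomial.C (dig β j)).natDegree = j + 1
      rw [← hd]
      apply Polynomial.natDegree_sub_eq_left_of_natDegree_lt
      rw [hd, Polynomial.natDegree_C]
      exact Nat.succ_pos j

lemma P_eq_aeval (β x : ℝ) (j : ℕ) : Polynomial.aeval x (Q β j) = P β j x := by
  induction j with
  | zero => simp [Q, P]
  | succ j ih =>
    show Polynomial.aeval x (Polynomial.X * Q β j - Polynomial.C (dig β j)) = x * P β j x - dig β j
    rw [map_sub, map_mul, Polynomial.aeval_X, Polynomial.aeval_C, ih]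
    norm_num

lemma P_ne_zero {β : ℝ} (h : Transcendental ℚ β) (j : ℕ) : P β j β ≠ 0 := by
  intro h0
  apply h
  refine ⟨(Q β j).map (algebraMap ℤ ℚ), ?_, ?_⟩
  · exact (((Q_monic β j).1).map (algebraMap ℤ ℚ)).ne_zero
  · rw [Polynomial.aeval_map_algebraMap, P_eq_aeval, h0]

end NSP

namespace NSP

lemma P_w_le {β w : ℝ} (hw : 0 < w) (hwβ : w < β) (hβ1 : 1 < β) (j : ℕ) :
    P β (j+1) w ≤ (w/β)^(j+1) * P β (j+1) β - ((dig β 0 : ℝ) * (1 - w/β)) * w^j := by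
  have hβ0 : (0:ℝ) < β := lt_trans hw hwβ
  have hβne : β ≠ 0 := ne_of_gt hβ0
  induction j with
  | zero =>
    show w * P β 0 w - (dig β 0 : ℝ) ≤ (w/β)^1 * (β * P β 0 β - (dig β 0 : ℝ)) - _
    show w * 1 - (dig β 0 : ℝ) ≤ (w/β)^1 * (β * 1 - (dig β 0 : ℝ)) - ((dig β 0 : ℝ) * (1 - w/β)) * w^0
    have : (w/β)^1 * (β * 1 - (dig β 0 : ℝ)) - ((dig β 0 : ℝ) * (1 - w/β)) * w^0 = w * 1 - (dig β 0 : ℝ) := by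
      field_simp; ring
    rw [this]
  | succ j ih =>
    have hd : (0:ℝ) ≤ (dig β (j+1) : ℝ) := by exact_mod_cast dig_nonneg hβ0 (j+1)
    have hq1 : (w/β)^(j+2) ≤ 1 := by
      apply pow_le_one₀ (div_nonneg hw.le hβ0.le)
      rw [div_le_one hβ0]; exact hwβ.le
    have step1 : P β (j+2) w ≤ w * ((w/β)^(j+1) * P β (j+1) β - ((dig β 0 : ℝ) * (1 - w/β)) * w^j) - (dig β (j+1) : ℝ) := by
      show w * P β (j+1) w - (dig β (j+1) : ℝ) ≤ _
      have := mul_le_mul_of_nonneg_left ih hw.le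
      linarith
    have e1 : (w/β)^(j+2) * β = (w/β)^(j+1) * w := by
      rw [pow_succ]; field_simp
    have e1' : (w/β)^(j+2) * (β * P β (j+1) β) = (w/β)^(j+1) * w * P β (j+1) β := by
      rw [← mul_assoc, e1]
    have hdd : (w/β)^(j+2) * (dig β (j+1) : ℝ) ≤ (dig β (j+1) : ℝ) := by
      nlinarith
    show P β (j+2) w ≤ (w/β)^(j+2) * (β * P β (j+1) β - (dig β (j+1):ℝ)) - ((dig β 0 : ℝ) * (1 - w/β)) * w^(j+1)
    have expand : (w/β)^(j+2) * (β * P β (j+1) β - (dig β (j+1):ℝ))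
        = (w/β)^(j+1) * w * P β (j+1) β - (w/β)^(j+2) * (dig β (j+1):ℝ) := by
      rw [mul_sub, e1']
    rw [expand]
    have : w * ((w/β)^(j+1) * P β (j+1) β - ((dig β 0 : ℝ) * (1 - w/β)) * w^j)
        = (w/β)^(j+1) * w * P β (j+1) β - ((dig β 0 : ℝ) * (1 - w/β)) * w^(j+1) := by
      ring
    rw [this] at step1
    linarith

end NSP

set_option maxHeartbeats 1000000 in
theorem nonSimpleParry_dense' :
    ∀ u v : ℝ, 1 < u → u < v →
      ∃ β : ℝ, u < β ∧ β < v ∧ (1 < β ∧ Set.Finite {x : ℝ | ∃ n : ℕ, 1 ≤ n ∧ (betaT β)^[n] 1 = x}) ∧ ¬ ∃ n : ℕ, 1 ≤ n ∧ (betaT β)^[n] 1 = 0 := by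
  intro u v hu huv
  classical
  -- pick a transcendental β₀ in (u, v)
  have hAcount : {x : ℝ | IsAlgebraic ℚ x}.Countable := Algebraic.countable ℚ ℝ
  have hnsub : ¬ (Set.Ioo u v ⊆ {x : ℝ | IsAlgebraic ℚ x}) := by
    intro hsub
    have h2 : (Set.Ioo u v).Countable := hAcount.mono hsub
    have h3 : Cardinal.mk (Set.Ioo u v) = Cardinal.continuum := Cardinal.mk_Ioo_real huv
    have h4 : Cardinal.mk (Set.Ioo u v) ≤ Cardinal.aleph0 :=
      Cardinal.le_aleph0_iff_set_countable.2 h2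
    rw [h3] at h4
    exact absurd h4 (not_le.2 Cardinal.aleph0_lt_continuum)
  obtain ⟨β₀, hmem, htr⟩ := Set.not_subset.1 hnsub
  obtain ⟨huβ, hβv⟩ := hmem
  have htrans : Transcendental ℚ β₀ := htr
  have hβ1 : 1 < β₀ := lt_trans hu huβ
  have hβ0 : (0:ℝ) < β₀ := by linarith
  set w : ℝ := (u + β₀)/2 with hwdef
  have hw1 : 1 < w := by rw [hwdef]; linarith
  have hw0 : (0:ℝ) < w := by linarith
  have huw : u < w := by rw [hwdef]; linarith
  have hwβ : w < β₀ := by rw [hwdef]; linarith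
  -- digits are nonnegative, first digit positive
  open NSP in
  have hd0 : (1:ℤ) ≤ dig β₀ 0 := by
    rw [NSP.dig, NSP.orb_zero, mul_one]
    exact Int.le_floor.2 (by exact_mod_cast hβ1.le)
  set c : ℝ := (NSP.dig β₀ 0 : ℝ) * (1 - w/β₀) with hcdef
  have hc : 0 < c := by
    apply mul_pos
    · exact_mod_cast lt_of_lt_of_le zero_lt_one hd0
    · have : w / β₀ < 1 := (div_lt_one hβ0).2 hwβ
      linarith
  -- choose n with P β₀ n w < 0
  obtain ⟨k, hk⟩ := pow_unbounded_of_one_lt (1/c) hw1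
  set n := k + 1 with hndef
  have hPw_neg : NSP.P β₀ n w < 0 := by
    have hb := NSP.P_w_le hw0 hwβ hβ1 k
    have h6 : 0 ≤ NSP.P β₀ (k+1) β₀ := by rw [NSP.P_self]; exact NSP.orb_nonneg _ _
    have h7 : NSP.P β₀ (k+1) β₀ < 1 := by rw [NSP.P_self]; exact NSP.orb_lt_one _ _
    have h8 : (w/β₀)^(k+1) ≤ 1 := by
      apply pow_le_one₀ (div_nonneg hw0.le hβ0.le)
      rw [div_le_one hβ0]; exact hwβ.le
    have h8' : 0 ≤ (w/β₀)^(k+1) := pow_nonneg (div_nonneg hw0.le hβ0.le) _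
    have h5 : (w/β₀)^(k+1) * NSP.P β₀ (k+1) β₀ ≤ 1 := by nlinarith
    have h9 : 1 < c * w^k := by
      rw [div_lt_iff₀ hc] at hk
      nlinarith
    have : NSP.P β₀ n w ≤ (w/β₀)^(k+1) * NSP.P β₀ (k+1) β₀ - c * w^k := hb
    linarith
  -- τ := P β₀ n β₀ ∈ (0,1)
  have hτpos : 0 < NSP.P β₀ n β₀ := by
    rcases lt_or_eq_of_le (by rw [NSP.P_self]; exact NSP.orb_nonneg _ _ : (0:ℝ) ≤ NSP.P β₀ n β₀) with h | h
    · exact h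
    · exact absurd h.symm (NSP.P_ne_zero htrans n)
  have hτlt : NSP.P β₀ n β₀ < 1 := by rw [NSP.P_self]; exact NSP.orb_lt_one _ _
  set τ := NSP.P β₀ n β₀ with hτdef
  -- choose the period length m+1
  obtain ⟨p₁, hp₁⟩ := pow_unbounded_of_one_lt (1 + 1/τ) hβ1
  obtain ⟨p₂, hp₂⟩ := pow_unbounded_of_one_lt 2 hw1
  obtain ⟨p₃, hp₃⟩ := pow_unbounded_of_one_lt (1/(w-1)) hw1
  set m := p₁ + p₂ + p₃ with hmdef
  have hβp : 1 + 1/τ < β₀^(m+1) :=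
    lt_of_lt_of_le hp₁ (pow_le_pow_right₀ hβ1.le (by omega))
  have hwp2 : 2 < w^(m+1) :=
    lt_of_lt_of_le hp₂ (pow_le_pow_right₀ hw1.le (by omega))
  have hwp3 : 1 < w^m * (w - 1) := by
    have hw1' : 0 < w - 1 := by linarith
    have h1 : 1/(w-1) < w^m := lt_of_lt_of_le hp₃ (pow_le_pow_right₀ hw1.le (by omega))
    rw [div_lt_iff₀ hw1'] at h1
    linarith
  -- the equation G(x) = 0
  set G := fun x : ℝ => NSP.P β₀ n x * (x^(m+1) - 1) - 1 with hGdef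
  have hGw : G w < 0 := by
    have h1 : (0:ℝ) < w^(m+1) - 1 := by linarith
    have : NSP.P β₀ n w * (w^(m+1) - 1) < 0 := mul_neg_of_neg_of_pos hPw_neg h1
    simp only [hGdef]; linarith
  have hGβ : 0 < G β₀ := by
    have h1 : 1/τ < β₀^(m+1) - 1 := by linarith
    rw [div_lt_iff₀ hτpos] at h1
    simp only [hGdef, ← hτdef]
    nlinarith
  have hGcont : ContinuousOn G (Set.Icc w β₀) := by
    apply Continuous.continuousOn
    exact ((NSP.P_cont β₀ n).mul ((continuous_pow (m+1)).sub continuous_const)).sub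
      continuous_const
  obtain ⟨B, hBmem, hGB⟩ := intermediate_value_Ioo hwβ.le hGcont (Set.mem_Ioo.2 ⟨hGw, hGβ⟩)
  obtain ⟨hwB, hBβ⟩ := hBmem
  have hB1 : 1 < B := lt_trans hw1 hwB
  have hB0 : (0:ℝ) < B := by linarith
  -- basic consequences of G(B) = 0
  have hBp2 : 2 < B^(m+1) := lt_of_lt_of_le hwp2 (pow_le_pow_left₀ hw0.le hwB.le _)
  have hBden : (0:ℝ) < B^(m+1) - 1 := by linarith
  have hGB' : NSP.P β₀ n B * (B^(m+1) - 1) = 1 := by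
    have : NSP.P β₀ n B * (B^(m+1) - 1) - 1 = 0 := hGB
    linarith
  set τB := NSP.P β₀ n B with hτBdef
  have hτBeq : τB = 1/(B^(m+1) - 1) := by
    rw [eq_div_iff hBden.ne']; exact hGB'
  have hτBpos : 0 < τB := by rw [hτBeq]; positivity
  have hτBlt : τB < 1 := by
    rw [hτBeq, div_lt_one hBden]; linarith
  have hBm_cond : 1 < B^m * (B - 1) := by
    have h1 : w^m ≤ B^m := pow_le_pow_left₀ hw0.le hwB.le m
    have h2 : w - 1 < B - 1 := by linarith
    nlinarith [pow_pos hw0 m]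
  have hcycmax : B^m * τB < 1 := by
    have hpow : B^(m+1) = B^m * B := pow_succ B m
    -- B^m < B^(m+1) - 1, so B^m * τB = B^m/(B^(m+1)-1) < 1
    have h1 : B^m < B^(m+1) - 1 := by nlinarith
    nlinarith
  -- positivity of all P β₀ j B for j ≤ n
  have hstep : ∀ j, 0 < NSP.P β₀ (j+1) B → 0 < NSP.P β₀ j B := by
    intro j h
    have hd : (0:ℝ) ≤ (NSP.dig β₀ j : ℝ) := by exact_mod_cast NSP.dig_nonneg hβ0 j
    have he : NSP.P β₀ (j+1) B = B * NSP.P β₀ j B - NSP.dig β₀ j := rfl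
    nlinarith [he ▸ h]
  have hPposB : ∀ j, j ≤ n → 0 < NSP.P β₀ j B := by
    have key : ∀ k, 0 < NSP.P β₀ (n - k) B := by
      intro k
      induction k with
      | zero => simpa using hτBpos
      | succ k ih =>
        rcases le_or_gt n k with h | h
        · have h0 : n - (k+1) = 0 := by omega
          rw [h0]; norm_num [NSP.P]
        · have he : n - k = (n - (k+1)) + 1 := by omega
          rw [he] at ih
          exact hstep _ ih
    intro j hj
    have := key (n - j)
    rwa [Nat.sub_sub_self hj] at this
  -- monotonicity: P β₀ j B ≤ P β₀ j β₀ for j ≤ n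
  have hPmono : ∀ j, j ≤ n → NSP.P β₀ j B ≤ NSP.P β₀ j β₀ := by
    intro j
    induction j with
    | zero => intro _; exact le_refl _
    | succ j ih =>
      intro hj
      have h1 := ih (Nat.le_of_succ_le hj)
      have h2 := hPposB j (Nat.le_of_succ_le hj)
      show B * NSP.P β₀ j B - (NSP.dig β₀ j : ℝ) ≤ β₀ * NSP.P β₀ j β₀ - (NSP.dig β₀ j : ℝ)
      have : B * NSP.P β₀ j B ≤ β₀ * NSP.P β₀ j β₀ :=
        mul_le_mul hBβ.le h1 h2.le hβ0.le
      linarith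
  have hPltB : ∀ j, 1 ≤ j → j ≤ n → NSP.P β₀ j B < 1 := by
    intro j h1 hj
    refine lt_of_le_of_lt (hPmono j hj) ?_
    obtain ⟨i, rfl⟩ := Nat.exists_eq_add_of_le h1
    rw [add_comm, NSP.P_self]
    exact NSP.orb_lt_one _ _
  -- orbit identity up to time n
  set T := betaT B with hTdef
  have horb : ∀ j, j ≤ n → T^[j] 1 = NSP.P β₀ j B := by
    intro j
    induction j with
    | zero => intro _; simp [NSP.P]
    | succ j ih =>
      intro hj
      rw [Function.iterate_succ_apply', ih (Nat.le_of_succ_le hj)]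
      have he : NSP.P β₀ (j+1) B = B * NSP.P β₀ j B - NSP.dig β₀ j := rfl
      have hfl : ⌊B * NSP.P β₀ j B⌋ = NSP.dig β₀ j := by
        rw [Int.floor_eq_iff]
        constructor
        · have := hPposB (j+1) hj
          rw [he] at this
          linarith
        · have := hPltB (j+1) (Nat.succ_le_succ (Nat.zero_le j)) hj
          rw [he] at this
          skip
          linarith
      show betaT B (NSP.P β₀ j B) = NSP.P β₀ (j+1) B
      rw [betaT, hfl, he]
  -- the cycle
  have hcyc : ∀ i, i ≤ m → T^[n + i] 1 = B^i * τB := by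
    intro i
    induction i with
    | zero => intro _; simpa using horb n le_rfl
    | succ i ih =>
      intro hi
      have hii := ih (Nat.le_of_succ_le hi)
      have he : n + (i+1) = (n+i) + 1 := rfl
      rw [he, Function.iterate_succ_apply', hii]
      have hval : B * (B^i * τB) = B^(i+1) * τB := by ring
      have hpos : 0 < B^(i+1) * τB := mul_pos (pow_pos hB0 _) hτBpos
      have hlt : B^(i+1) * τB < 1 := by
        have h1 : B^(i+1) ≤ B^m := pow_le_pow_right₀ hB1.le hi
        have := mul_le_mul_of_nonneg_right h1 hτBpos.le
        linarith
      have hfl : ⌊B * (B^i * τB)⌋ = 0 := by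
        rw [hval, Int.floor_eq_zero_iff]
        exact ⟨hpos.le, hlt⟩
      show betaT B (B^i * τB) = B^(i+1) * τB
      rw [betaT, hfl]
      push_cast
      rw [hval]
      ring
  have hper : T^[n + (m+1)] 1 = τB := by
    have he : n + (m+1) = (n+m) + 1 := rfl
    rw [he, Function.iterate_succ_apply', hcyc m le_rfl]
    have hval : B * (B^m * τB) = B^(m+1) * τB := by ring
    have hval2 : B^(m+1) * τB = 1 + τB := by
      have : τB * (B^(m+1) - 1) = 1 := hGB'
      nlinarith
    have hfl : ⌊B * (B^m * τB)⌋ = 1 := by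
      rw [hval, hval2, Int.floor_eq_iff]
      constructor
      · push_cast; linarith
      · push_cast; linarith
    show betaT B (B^m * τB) = τB
    rw [betaT, hfl, hval, hval2]
    push_cast
    ring
  -- eventual periodicity
  have hperiodic : ∀ j, T^[(n + (m+1)) + j] 1 = T^[n + j] 1 := by
    intro j
    rw [add_comm (n + (m+1)) j, Function.iterate_add_apply, hper,
      add_comm n j, Function.iterate_add_apply, horb n le_rfl]
  have hreduce : ∀ M, 1 ≤ M → ∃ j, 1 ≤ j ∧ j ≤ n + (m+1) ∧ T^[M] 1 = T^[j] 1 := by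
    intro M
    induction M using Nat.strong_induction_on with
    | _ M ih =>
      intro hM
      by_cases hle : M ≤ n + (m+1)
      · exact ⟨M, hM, hle, rfl⟩
      · push_neg at hle
        have h1 : M - (m+1) < M := by omega
        have h2 : 1 ≤ M - (m+1) := by omega
        have h3 : T^[M] 1 = T^[M - (m+1)] 1 := by
          have he : M = (n + (m+1)) + (M - (n + (m+1))) := by omega
          rw [he, hperiodic]
          congr 1
          omega
        obtain ⟨j, hj1, hj2, hj3⟩ := ih _ h1 h2
        exact ⟨j, hj1, hj2, h3.trans hj3⟩
  have hfin : Set.Finite {x : ℝ | ∃ q : ℕ, 1 ≤ q ∧ (betaT B)^[q] 1 = x} := by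
    apply Set.Finite.subset ((Set.finite_Icc 1 (n + (m+1))).image (fun j => T^[j] 1))
    rintro x ⟨q, hq1, rfl⟩
    obtain ⟨j, hj1, hj2, hj3⟩ := hreduce q hq1
    exact ⟨j, Set.mem_Icc.2 ⟨hj1, hj2⟩, hj3.symm⟩
  -- the orbit visits τB > 0 at arbitrarily late times
  have hvisit : ∀ q : ℕ, T^[n + q * (m+1)] 1 = τB := by
    intro q
    induction q with
    | zero => simpa using horb n le_rfl
    | succ q ih =>
      have he : n + (q+1) * (m+1) = (n + (m+1)) + q * (m+1) := by ring
      rw [he, hperiodic, ih]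
  refine ⟨B, lt_trans huw hwB, lt_trans hBβ hβv, ⟨hB1, hfin⟩, ?_⟩
  rintro ⟨M, hM1, hM0⟩
  have hzero : ∀ j, T^[M + j] 1 = 0 := by
    intro j
    induction j with
    | zero => simpa using hM0
    | succ j ih =>
      have he : M + (j+1) = (M+j) + 1 := rfl
      rw [he, Function.iterate_succ_apply', ih]
      show betaT B 0 = 0
      simp [betaT]
  have hge : M ≤ n + M * (m+1) := by
    have : M ≤ M * (m+1) := Nat.le_mul_of_pos_right M (by omega)
    omega
  have h0 := hzero (n + M * (m+1) - M)
  rw [(by omega : M + (n + M * (m+1) - M) = n + M * (m+1))] at h0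
  rw [hvisit M] at h0
  exact absurd h0 (ne_of_gt hτBpos)

/-- The set of non-simple Parry numbers is dense in `(1, ∞)`. -/
theorem nonSimpleParry_dense :
    ∀ u v : ℝ, 1 < u → u < v →
      ∃ β : ℝ, u < β ∧ β < v ∧ IsParry β ∧ ¬ IsSimpleParry β := by
  intro u v hu huv
  obtain ⟨β, h1, h2, h3, h4⟩ := nonSimpleParry_dense' u v hu huv
  exact ⟨β, h1, h2, h3, fun h => h4 h.2⟩
end

section
/- If α is a Perron number, then for every integer k ≥ 1 the power α^k is a Perron number, and the degree of the minimal polynomial of α^k over ℚ equals the degree of the minimal polynomial of α over ℚ. -/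
open Polynomial IntermediateField

lemma perron_mem_adjoin_pow (α : ℝ) (hα : IsPerron α) (k : ℕ) (hk : 1 ≤ k) :
    (α : ℂ) ∈ ℚ⟮((α : ℂ)) ^ k⟯ := by
  obtain ⟨h1, hint, hconj⟩ := hα
  have hα0 : (0:ℝ) < α := lt_trans zero_lt_one h1
  have hQ : IsIntegral ℚ α := hint.tower_top
  set a : ℂ := (α : ℂ) with ha_def
  have haQ : IsIntegral ℚ a := hQ.map (IsScalarTower.toAlgHom ℚ ℝ ℂ)
  have hmin : minpoly ℚ a = minpoly ℚ α :=
    minpoly.algebraMap_eq (algebraMap ℝ ℂ).injective α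
  by_contra hmem
  set F := ℚ⟮a ^ k⟯ with hF
  have haF : IsIntegral F a := haQ.tower_top
  have hpow_mem : a ^ k ∈ F := mem_adjoin_simple_self ℚ (a ^ k)
  -- minpoly has degree ≥ 2
  have h2 : 2 ≤ (minpoly F a).natDegree := by
    rw [minpoly.two_le_natDegree_iff haF]
    rintro ⟨y, hy⟩
    exact hmem (hy ▸ y.2)
  set p := minpoly F a with hp
  set P := p.map (algebraMap F ℂ) with hP
  have hpne : p ≠ 0 := minpoly.ne_zero haF
  have hPne : P ≠ 0 := (Polynomial.map_ne_zero_iff (algebraMap F ℂ).injective).2 hpne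
  have hcard : Multiset.card P.roots = P.natDegree :=
    splits_iff_card_roots.1 (IsAlgClosed.splits P)
  have hdeg : P.natDegree = p.natDegree := natDegree_map _
  have hnodup : P.roots.Nodup :=
    nodup_roots ((minpoly.irreducible haF).separable.map)
  have haroot : a ∈ P.roots := by
    rw [mem_roots hPne, IsRoot, eval_map, ← aeval_def, minpoly.aeval]
  -- get another root
  have h2' : 2 ≤ Multiset.card P.roots := by
    rw [hcard]; rw [hp] at h2; exact hdeg ▸ h2
  have hcard' : 1 ≤ Multiset.card (P.roots.erase a) := by
    rw [Multiset.card_erase_of_mem haroot, Nat.pred_eq_sub_one]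
    omega
  obtain ⟨z, hz⟩ := Multiset.card_pos_iff_exists_mem.1 hcard'
  have hzne : z ≠ a := (Multiset.Nodup.mem_erase_iff hnodup).1 hz |>.1
  have hzroot : z ∈ P.roots := Multiset.erase_subset _ _ hz
  have hzP : P.eval z = 0 := (mem_roots hPne).1 hzroot
  -- z ^ k = a ^ k
  have hzk : z ^ k = a ^ k := by
    have hqd : p ∣ (X ^ k - C (⟨a ^ k, hpow_mem⟩ : F)) := by
      apply minpoly.dvd
      simp
    obtain ⟨c, hc⟩ := hqd
    have : ((X ^ k - C (⟨a ^ k, hpow_mem⟩ : F)).map (algebraMap F ℂ)).eval z = 0 := by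
      rw [hc, Polynomial.map_mul, eval_mul, ← hP, hzP, zero_mul]
    simpa [sub_eq_zero] using this
  -- z is a root of minpoly ℚ α
  have hzmin : Polynomial.aeval z (minpoly ℚ α) = 0 := by
    have hdvd : p ∣ (minpoly ℚ a).map (algebraMap ℚ F) :=
      minpoly.dvd_map_of_isScalarTower ℚ F a
    obtain ⟨c, hc⟩ := hdvd
    have : (((minpoly ℚ a).map (algebraMap ℚ F)).map (algebraMap F ℂ)).eval z = 0 := by
      rw [hc, Polynomial.map_mul, eval_mul, ← hP, hzP, zero_mul]
    rw [Polynomial.map_map, ← IsScalarTower.algebraMap_eq, eval_map] at this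
    rw [← hmin, aeval_def]
    exact this
  have hlt : ‖z‖ < α := hconj z hzmin hzne
  have habs : ‖z‖ ^ k = α ^ k := by
    rw [← norm_pow, hzk, ha_def, ← Complex.ofReal_pow, Complex.norm_real, Real.norm_eq_abs,
      abs_of_pos (pow_pos hα0 k)]
  have : α ^ k < α ^ k := by
    calc α ^ k = ‖z‖ ^ k := habs.symm
    _ < α ^ k := pow_lt_pow_left₀ hlt (norm_nonneg z) (by omega)
  exact lt_irrefl _ this

/-- Powers of a Perron number are Perron numbers of the same degree. -/
theorem perron_pow (α : ℝ) (hα : IsPerron α) (k : ℕ) (hk : 1 ≤ k) :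
    IsPerron (α ^ k) ∧ (minpoly ℚ (α ^ k)).natDegree = (minpoly ℚ α).natDegree := by
  obtain ⟨h1, hint, hconj⟩ := hα
  have hα0 : (0:ℝ) < α := lt_trans zero_lt_one h1
  have hQ : IsIntegral ℚ α := hint.tower_top
  set a : ℂ := (α : ℂ) with ha_def
  have haQ : IsIntegral ℚ a := hQ.map (IsScalarTower.toAlgHom ℚ ℝ ℂ)
  have hakQ : IsIntegral ℚ (a ^ k) := haQ.pow k
  have hmin : minpoly ℚ a = minpoly ℚ α :=
    minpoly.algebraMap_eq (algebraMap ℝ ℂ).injective α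
  have hmink : minpoly ℚ (a ^ k) = minpoly ℚ (α ^ k) := by
    rw [ha_def, ← Complex.ofReal_pow]
    exact minpoly.algebraMap_eq (algebraMap ℝ ℂ).injective (α ^ k)
  have hamem : a ∈ ℚ⟮a ^ k⟯ := perron_mem_adjoin_pow α ⟨h1, hint, hconj⟩ k hk
  have hfe : ℚ⟮a ^ k⟯ = ℚ⟮a⟯ := by
    apply le_antisymm
    · exact adjoin_le_iff.2 (Set.singleton_subset_iff.2
        (pow_mem (mem_adjoin_simple_self ℚ a) k))
    · exact adjoin_le_iff.2 (Set.singleton_subset_iff.2 hamem)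
  have hd : (minpoly ℚ (a ^ k)).natDegree = (minpoly ℚ a).natDegree := by
    rw [← IntermediateField.adjoin.finrank hakQ, ← IntermediateField.adjoin.finrank haQ, hfe]
  refine ⟨⟨one_lt_pow₀ h1 (by omega), hint.pow k, ?_⟩, by rw [← hmink, ← hmin, hd]⟩
  intro z hz hzne
  have hzr : z ∈ (minpoly ℚ (a ^ k)).aroots ℂ := by
    rw [mem_aroots]
    exact ⟨minpoly.ne_zero hakQ, by rw [hmink]; exact hz⟩
  set σ := (IntermediateField.algHomAdjoinIntegralEquiv ℚ hakQ).symm ⟨z, hzr⟩ with hσ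
  have hgen : σ (AdjoinSimple.gen ℚ (a ^ k)) = z :=
    algHomAdjoinIntegralEquiv_symm_apply_gen ℚ hakQ _
  set w := σ ⟨a, hamem⟩ with hw
  have hgeneq : (⟨a, hamem⟩ : ℚ⟮a ^ k⟯) ^ k = AdjoinSimple.gen ℚ (a ^ k) :=
    Subtype.ext (by push_cast; rfl)
  have hwk : w ^ k = z := by
    rw [hw, ← map_pow, hgeneq, hgen]
  have hw_root : Polynomial.aeval w (minpoly ℚ α) = 0 := by
    rw [← hmin, hw, Polynomial.aeval_algHom_apply σ ⟨a, hamem⟩ (minpoly ℚ a)]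
    have h0 : Polynomial.aeval (⟨a, hamem⟩ : ℚ⟮a ^ k⟯) (minpoly ℚ a) = 0 := by
      apply (algebraMap ℚ⟮a ^ k⟯ ℂ).injective
      rw [map_zero, ← Polynomial.aeval_algebraMap_apply]
      exact minpoly.aeval ℚ a
    exact (congrArg σ h0).trans (map_zero σ)
  by_cases hwa : w = a
  · exfalso
    apply hzne
    rw [← hwk, hwa, ha_def]
    push_cast
    ring
  · have hlt : ‖w‖ < α := hconj w hw_root hwa
    calc ‖z‖ = ‖w‖ ^ k := by rw [← hwk, norm_pow]
    _ < α ^ k := pow_lt_pow_left₀ hlt (norm_nonneg w) (by omega)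
end

section
/- Let θ₀ = (1+√5)/2 be the golden ratio, and let β be a Perron number of degree d over ℚ that is neither a Pisot number nor a Salem number (so that M(β) > β). Then for every integer n ≥ 1 such that β^n is a Parry number, one has n ≤ d·log(θ₀)/(log(M(β)) − log(β)). In particular, if d·log(θ₀)/(log(M(β)) − log(β)) < 1, then β itself is not a Parry number. -/
open Polynomial Filter

lemma golden_aux {ρ : ℝ} (h0 : 0 ≤ ρ) (h : ρ < (Real.sqrt 5 - 1)/2) : ρ^2 + ρ < 1 := by
  have h5 : Real.sqrt 5 ^ 2 = 5 := Real.sq_sqrt (by norm_num)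
  have h5' : 0 ≤ Real.sqrt 5 := Real.sqrt_nonneg 5
  nlinarith


lemma zerofree (y : ℂ) (r : ℕ → ℝ) (hr0 : r 0 = 1)
    (hge : ∀ k, 0 ≤ r k) (hle : ∀ k, r k ≤ 1)
    (hy : ‖y‖ < (Real.sqrt 5 - 1)/2)
    (hsum : HasSum (fun k => (r k : ℂ) * y ^ k) 0) : False := by
  set ρ := ‖y‖ with hρdef
  have hρ0 : 0 ≤ ρ := norm_nonneg y
  have key : ρ^2 + ρ < 1 := golden_aux hρ0 hy
  have hρ1 : ρ < 1 := by nlinarith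
  have hnorm : ‖y‖ < 1 := by exact hρ1
  -- real parts of hsum
  have hre : HasSum (fun k => r k * (y ^ k).re) (0:ℝ) := by
    have := Complex.hasSum_re hsum
    simpa [Complex.mul_re] using this
  -- geometric sums
  have hgeo : HasSum (fun k => (y:ℂ) ^ k) (1 - y)⁻¹ := hasSum_geometric_of_norm_lt_one hnorm
  have hgeore : HasSum (fun k => ((y:ℂ) ^ k).re) ((1 - y)⁻¹).re := Complex.hasSum_re hgeo
  have hgeoρ : HasSum (fun k => ρ ^ k) (1 - ρ)⁻¹ := hasSum_geometric_of_lt_one hρ0 hρ1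
  -- lower bound series
  have hh : HasSum (fun k => (((y:ℂ) ^ k).re - ρ ^ k)/2)
      ((((1 - y)⁻¹).re - (1 - ρ)⁻¹)/2) := (hgeore.sub hgeoρ).div_const 2
  have hupd : HasSum (Function.update (fun k => (((y:ℂ) ^ k).re - ρ ^ k)/2) 0 1)
      (1 - ((((y:ℂ) ^ 0).re - ρ ^ 0)/2) + ((((1 - y)⁻¹).re - (1 - ρ)⁻¹)/2)) := hh.update 0 1
  have habsk : ∀ k : ℕ, |((y:ℂ) ^ k).re| ≤ ρ ^ k := by
    intro k
    calc |((y:ℂ) ^ k).re| ≤ ‖y ^ k‖ := Complex.abs_re_le_norm _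
    _ = ρ ^ k := by rw [norm_pow]
  have hpt : ∀ k : ℕ, Function.update (fun k => (((y:ℂ) ^ k).re - ρ ^ k)/2) 0 1 k
      ≤ r k * (y ^ k).re := by
    intro k
    rcases eq_or_ne k 0 with rfl | hk
    · simp [hr0]
    · rw [Function.update_of_ne hk]
      have h1 := habsk k
      rcases le_or_gt 0 ((y:ℂ) ^ k).re with hc | hc
      · have : (((y:ℂ) ^ k).re - ρ ^ k)/2 ≤ 0 := by
          have := (abs_le.mp h1).2; linarith
        have : 0 ≤ r k * (y ^ k).re := mul_nonneg (hge k) hc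
        linarith [(abs_le.mp h1).2]
      · have h2 : r k * (y ^ k).re ≥ 1 * (y ^ k).re := by
          apply mul_le_mul_of_nonpos_right (hle k) hc.le
        have := (abs_le.mp h1).1
        nlinarith
  have hle0 : (1 - ((((y:ℂ) ^ 0).re - ρ ^ 0)/2) + ((((1 - y)⁻¹).re - (1 - ρ)⁻¹)/2)) ≤ 0 :=
    hasSum_le hpt hupd hre
  -- now derive contradiction
  have h00 : ((y:ℂ) ^ 0).re = 1 := by simp
  rw [h00] at hle0
  simp only [pow_zero] at hle0
  -- hle0 : 1 - (1-1)/2 + (re - inv)/2 ≤ 0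
  set u := y.re with hu
  set v := y.im with hv
  have huv : u^2 + v^2 = ρ^2 := by
    rw [hρdef, Complex.sq_norm, Complex.normSq_apply]; ring
  have hure : |u| ≤ ρ := Complex.abs_re_le_norm y
  have hinvre : ((1 - y)⁻¹).re = (1 - u) / ((1-u)^2 + v^2) := by
    rw [Complex.inv_re, Complex.normSq_apply]
    simp [Complex.sub_re, Complex.sub_im]
    ring_nf
    rfl
  have hD : (0:ℝ) < (1-u)^2 + v^2 := by
    have : u ≤ ρ := (abs_le.mp hure).2
    nlinarith [sq_nonneg v, sq_nonneg (1-u)]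
  have hstep1 : (1:ℝ)/(1+ρ) ≤ ((1 - y)⁻¹).re := by
    rw [hinvre, div_le_div_iff₀ (by linarith) hD]
    have h1 : -ρ ≤ u := (abs_le.mp hure).1
    nlinarith
  have hstep2 : (0:ℝ) < 2 + 1/(1+ρ) - 1/(1-ρ) := by
    have hp1 : (0:ℝ) < 1 + ρ := by linarith
    have hm1 : (0:ℝ) < 1 - ρ := by linarith
    have e1 : 1/(1-ρ) - 1/(1+ρ) = 2*ρ/((1-ρ)*(1+ρ)) := by field_simp; ring
    have e2 : 2*ρ/((1-ρ)*(1+ρ)) < 2 := by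
      rw [div_lt_iff₀ (by nlinarith)]
      nlinarith
    linarith
  have hfin : (0:ℝ) < 1 - (1-1)/2 + (((1 - y)⁻¹).re - (1 - ρ)⁻¹) / 2 := by
    have i1 : (1-ρ)⁻¹ = 1/(1-ρ) := (one_div _).symm
    rw [i1]
    linarith
  linarith

noncomputable def digPoly (d : ℕ → ℤ) : ℕ → Polynomial ℚ
  | 0 => 1
  | (k+1) => Polynomial.X * digPoly d k - Polynomial.C ((d k : ℚ))


lemma parry_conj_bound {γ : ℝ} (hP : IsParry γ) (z : ℂ)
    (hz : Polynomial.aeval z (minpoly ℚ γ) = 0) (hne : z ≠ (γ : ℂ)) :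
    ‖z‖ ≤ (1 + Real.sqrt 5)/2 := by
  obtain ⟨hγ1, hfin⟩ := hP
  by_contra hcon
  push_neg at hcon
  have h5 : Real.sqrt 5 ^ 2 = 5 := Real.sq_sqrt (by norm_num)
  have h5' : (1:ℝ) ≤ Real.sqrt 5 := by nlinarith [Real.sqrt_nonneg 5]
  have hθ1 : (1:ℝ) < (1 + Real.sqrt 5)/2 := by nlinarith
  have hz1 : 1 < ‖z‖ := lt_trans hθ1 hcon
  have hz0 : z ≠ 0 := by
    intro h; rw [h] at hz1; simp at hz1; linarith
  -- the orbit sequence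
  set r : ℕ → ℝ := fun k => (betaT γ)^[k] 1 with hrdef
  set d : ℕ → ℤ := fun k => ⌊γ * r k⌋ with hddef
  have hr0 : r 0 = 1 := rfl
  have hfract : ∀ x : ℝ, betaT γ x = Int.fract (γ * x) := fun x => rfl
  have hrsucc : ∀ k, r (k+1) = betaT γ (r k) := by
    intro k; rw [hrdef]; simp [Function.iterate_succ_apply']
  have hrrec : ∀ k, r (k+1) = γ * r k - (d k : ℝ) := by
    intro k; rw [hrsucc k]; rfl
  have hrge : ∀ k, 0 ≤ r k := by
    intro k; cases k with
    | zero => rw [hr0]; norm_num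
    | succ k => rw [hrsucc k, hfract]; exact Int.fract_nonneg _
  have hrle : ∀ k, r k ≤ 1 := by
    intro k; cases k with
    | zero => rw [hr0]
    | succ k => rw [hrsucc k, hfract]; exact le_of_lt (Int.fract_lt_one _)
  -- pigeonhole: eventual periodicity
  have hS : Finite ↥{x : ℝ | ∃ n : ℕ, 1 ≤ n ∧ (betaT γ)^[n] 1 = x} := hfin.to_subtype
  obtain ⟨a, b, hab, hfab⟩ := Finite.exists_ne_map_eq_of_infinite
    (fun k : ℕ => (⟨r (k+1), ⟨k+1, Nat.le_add_left 1 k, rfl⟩⟩ :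
      ↥{x : ℝ | ∃ n : ℕ, 1 ≤ n ∧ (betaT γ)^[n] 1 = x}))
  have hrab : r (a+1) = r (b+1) := congrArg Subtype.val hfab
  -- wlog a < b
  obtain ⟨m, p, hp1, hper0⟩ : ∃ m p : ℕ, 1 ≤ p ∧ r (m + p) = r m := by
    rcases lt_or_gt_of_ne hab with h | h
    · exact ⟨a+1, b - a, by omega, by rw [show a+1+(b-a) = b+1 by omega]; exact hrab.symm⟩
    · exact ⟨b+1, a - b, by omega, by rw [show b+1+(a-b) = a+1 by omega]; exact hrab⟩
  have hper : ∀ j, r (m + j + p) = r (m + j) := by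
    intro j; induction j with
    | zero => simpa using hper0
    | succ j ih =>
      have e1 : m + (j+1) + p = (m + j + p) + 1 := by omega
      have e2 : m + (j+1) = (m + j) + 1 := by omega
      rw [e1, e2, hrsucc (m+j+p), hrsucc (m+j), ih]
  have hd : ∀ j, d (m + j + p) = d (m + j) := by
    intro j; rw [hddef]; simp only; rw [hper j]
  -- evaluation of digPoly
  have hevalγ : ∀ k, Polynomial.aeval γ (digPoly d k) = r k := by
    intro k; induction k with
    | zero => simp [digPoly, hr0]
    | succ k ih => simp [digPoly, ih, hrrec k]
  set s : ℕ → ℂ := fun k => Polynomial.aeval z (digPoly d k) with hsdef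
  have hs0 : s 0 = 1 := by simp [hsdef, digPoly]
  have hsrec : ∀ k, s (k+1) = z * s k - (d k : ℂ) := by
    intro k; simp [hsdef, digPoly]
  -- s is eventually periodic
  have hsper0 : s (m + p) = s m := by
    have hq : Polynomial.aeval γ (digPoly d (m+p) - digPoly d m) = 0 := by
      rw [map_sub, hevalγ, hevalγ, hper0, sub_self]
    obtain ⟨c, hc⟩ := minpoly.dvd ℚ γ hq
    have := congrArg (Polynomial.aeval z) hc
    rw [map_sub, map_mul, hz, zero_mul] at this
    linear_combination this
  have hsper : ∀ j, s (m + j + p) = s (m + j) := by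
    intro j; induction j with
    | zero => simpa using hsper0
    | succ j ih =>
      have e1 : m + (j+1) + p = (m + j + p) + 1 := by omega
      have e2 : m + (j+1) = (m + j) + 1 := by omega
      rw [e1, e2, hsrec (m+j+p), hsrec (m+j), ih, hd j]
  -- s is bounded
  have hsrepr : ∀ k, ∃ i, i ≤ m + p ∧ s k = s i := by
    intro k; induction k using Nat.strong_induction_on with
    | _ k ih =>
      rcases le_or_gt k (m + p) with h | h
      · exact ⟨k, h, rfl⟩
      · have hper' : s (m + (k - m - p) + p) = s (m + (k - m - p)) := hsper _
        have hk : m + (k - m - p) + p = k := by omega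
        rw [hk] at hper'
        obtain ⟨i, hi, hsi⟩ := ih (m + (k - m - p)) (by omega)
        exact ⟨i, hi, hper'.trans hsi⟩
  obtain ⟨C, hC0, hCb⟩ : ∃ C : ℝ, 0 ≤ C ∧ ∀ k, ‖s k‖ ≤ C := by
    refine ⟨(Finset.range (m+p+1)).sup' ⟨0, by simp⟩ (fun i => ‖s i‖), ?_, ?_⟩
    · exact le_trans (norm_nonneg (s 0))
        (Finset.le_sup' (fun i => ‖s i‖) (by simp : 0 ∈ Finset.range (m+p+1)))
    · intro k
      obtain ⟨i, hi, hsi⟩ := hsrepr k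
      rw [hsi]
      exact Finset.le_sup' (fun i => ‖s i‖) (Finset.mem_range.mpr (by omega))
  -- the series identity
  set y : ℂ := z⁻¹ with hydef
  have hynorm : ‖y‖ < 1 := by
    rw [hydef, norm_inv]
    rw [inv_lt_one_iff₀]; right; exact hz1
  set f : ℕ → ℂ := fun i => ((r i : ℝ) : ℂ) * y ^ i with hfdef
  have hfsummable : Summable f := by
    apply Summable.of_norm_bounded (g := fun i => ‖y‖ ^ i)
      (summable_geometric_of_lt_one (norm_nonneg y) hynorm)
    intro i
    rw [hfdef]; simp only [norm_mul, norm_pow, Complex.norm_real]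
    have : |r i| = r i := abs_of_nonneg (hrge i)
    calc |r i| * ‖y‖ ^ i ≤ 1 * ‖y‖ ^ i := by
          apply mul_le_mul_of_nonneg_right _ (pow_nonneg (norm_nonneg y) i)
          rw [this]; exact hrle i
    _ = ‖y‖ ^ i := one_mul _
  set T : ℂ := ∑' i, f i with hTdef
  have hT : HasSum f T := hfsummable.hasSum
  have hA : Tendsto (fun N => ∑ i ∈ Finset.range N, f i) atTop (nhds T) := hT.tendsto_sum_nat
  -- identity
  have hzy : z * y = 1 := by rw [hydef, mul_inv_cancel₀ hz0]
  have key : ∀ N, s N * y ^ N =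
      1 - (γ : ℂ) * y * (∑ i ∈ Finset.range N, f i) + (∑ i ∈ Finset.range N, f (i+1)) := by
    intro N; induction N with
    | zero => simp [hs0]
    | succ N ih =>
      rw [hsrec, Finset.sum_range_succ, Finset.sum_range_succ]
      have hd' : ((d N : ℝ) : ℂ) = (γ : ℂ) * (r N : ℂ) - (r (N+1) : ℂ) := by
        have := hrrec N
        have : (d N : ℝ) = γ * r N - r (N+1) := by linarith
        calc ((d N : ℝ) : ℂ) = ((γ * r N - r (N+1) : ℝ) : ℂ) := by rw [this]
        _ = (γ : ℂ) * (r N : ℂ) - (r (N+1) : ℂ) := by push_cast; ring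
      have hyN : (z * s N - (d N : ℂ)) * y ^ (N+1) = s N * y ^ N - ((d N : ℝ) : ℂ) * y^(N+1) := by
        have : ((d N : ℂ)) = ((d N : ℝ) : ℂ) := by push_cast; rfl
        rw [this, sub_mul, pow_succ]
        have : z * s N * (y ^ N * y) = s N * y ^ N * (z * y) := by ring
        rw [this, hzy, mul_one]
      rw [hyN, ih, hd', hfdef]
      simp only
      push_cast
      ring
  -- limits
  have hB : Tendsto (fun N => ∑ i ∈ Finset.range N, f (i+1)) atTop (nhds (T - 1)) := by
    have h1 : Tendsto (fun N => (∑ i ∈ Finset.range (N+1), f i) - f 0) atTop (nhds (T - f 0)) :=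
      (hA.comp (tendsto_add_atTop_nat 1)).sub_const (f 0)
    have hf0 : f 0 = 1 := by simp [hfdef, hr0]
    rw [hf0] at h1
    convert h1 using 2 with N
    rw [Finset.sum_range_succ']
    simp [hf0]
  have hLHS : Tendsto (fun N => s N * y ^ N) atTop (nhds 0) := by
    have hb : ∀ N, ‖s N * y ^ N‖ ≤ C * ‖y‖ ^ N := by
      intro N
      rw [norm_mul, norm_pow]
      apply mul_le_mul_of_nonneg_right _ (pow_nonneg (norm_nonneg y) N)
      exact hCb N
    have ht : Filter.Tendsto (fun N => C * ‖y‖ ^ N) atTop (nhds 0) := by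
      have := (tendsto_pow_atTop_nhds_zero_of_lt_one (norm_nonneg y) hynorm).const_mul C
      simpa using this
    exact squeeze_zero_norm hb ht
  have hRHS : Tendsto (fun N => 1 - (γ : ℂ) * y * (∑ i ∈ Finset.range N, f i)
      + (∑ i ∈ Finset.range N, f (i+1))) atTop (nhds (1 - (γ : ℂ) * y * T + (T - 1))) :=
    (tendsto_const_nhds.sub (hA.const_mul _)).add hB
  have heq : (0 : ℂ) = 1 - (γ : ℂ) * y * T + (T - 1) := by
    apply tendsto_nhds_unique _ hRHS
    convert hLHS using 1
    funext N
    exact (key N).symm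
  -- T = 0
  have hγy : (γ : ℂ) * y ≠ 1 := by
    intro h
    apply hne
    rw [hydef] at h
    field_simp at h
    exact h.symm
  have hT0 : T = 0 := by
    have h2 : T * (1 - (γ:ℂ) * y) = 0 := by linear_combination -heq
    rcases mul_eq_zero.mp h2 with h | h
    · exact h
    · exfalso; apply hγy; linear_combination -h
  -- contradiction via zerofree
  have hylt : ‖y‖ < (Real.sqrt 5 - 1)/2 := by
    have h1 : ‖y‖ = (‖z‖)⁻¹ := by rw [hydef, norm_inv]
    have hθpos : (0:ℝ) < (1 + Real.sqrt 5)/2 := by linarith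
    have hinv : ((1 + Real.sqrt 5)/2)⁻¹ = (Real.sqrt 5 - 1)/2 := by
      apply inv_eq_of_mul_eq_one_right
      nlinarith
    rw [h1, ← hinv]
    exact inv_strictAnti₀ hθpos hcon
  exact zerofree y r hr0 hrge hrle hylt (hT0 ▸ hT)

lemma root_pow {β : ℝ} {z : ℂ} (n : ℕ) (hz : Polynomial.aeval z (minpoly ℚ β) = 0) :
    Polynomial.aeval (z ^ n) (minpoly ℚ (β ^ n)) = 0 := by
  have h1 : Polynomial.aeval β ((minpoly ℚ (β ^ n)).comp (Polynomial.X ^ n)) = 0 := by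
    rw [Polynomial.aeval_comp]
    simp [minpoly.aeval]
  obtain ⟨c, hc⟩ := minpoly.dvd ℚ β h1
  have h2 := congrArg (Polynomial.aeval z) hc
  rw [Polynomial.aeval_comp, map_mul, hz, zero_mul] at h2
  simpa using h2

lemma one_le_msprod (s : Multiset ℝ) (h : ∀ x ∈ s, (1:ℝ) ≤ x) : 1 ≤ s.prod := by
  induction s using Multiset.induction with
  | empty => simp
  | cons a t ih =>
    rw [Multiset.prod_cons]
    have ha := h a (Multiset.mem_cons_self a t)
    have ht := ih (fun x hx => h x (Multiset.mem_cons_of_mem hx))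
    nlinarith

lemma le_msprod {s : Multiset ℝ} {a : ℝ} (h : ∀ x ∈ s, (1:ℝ) ≤ x) (ha : a ∈ s) :
    a ≤ s.prod := by
  rw [← Multiset.cons_erase ha, Multiset.prod_cons]
  have := one_le_msprod (s.erase a) (fun x hx => h x (Multiset.mem_of_mem_erase hx))
  nlinarith [le_trans one_le_two (by linarith : (2:ℝ) ≤ 2), h a ha]

lemma msprod_pow_le (n : ℕ) (c : ℝ) (hc : 1 ≤ c) (s : Multiset ℝ)
    (h1 : ∀ x ∈ s, (1:ℝ) ≤ x) (h2 : ∀ x ∈ s, x ^ n ≤ c) :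
    s.prod ^ n ≤ c ^ (Multiset.card s) := by
  induction s using Multiset.induction with
  | empty => simpa using one_le_pow₀ hc
  | cons a t ih =>
    rw [Multiset.prod_cons, Multiset.card_cons, mul_pow, pow_succ']
    have ha := h1 a (Multiset.mem_cons_self a t)
    have han := h2 a (Multiset.mem_cons_self a t)
    have ht1 : (1:ℝ) ≤ t.prod := one_le_msprod t (fun x hx => h1 x (Multiset.mem_cons_of_mem hx))
    have htn := ih (fun x hx => h1 x (Multiset.mem_cons_of_mem hx))
      (fun x hx => h2 x (Multiset.mem_cons_of_mem hx))
    have h3 : (0:ℝ) ≤ t.prod ^ n := pow_nonneg (by linarith) n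
    have h4 : (0:ℝ) ≤ a ^ n := pow_nonneg (by linarith) n
    have hcpos : (0:ℝ) ≤ c ^ (Multiset.card t) := pow_nonneg (by linarith) _
    nlinarith


/-- Bound on the Parry order of a Perron number which is neither Pisot nor Salem,
in terms of its degree and Mahler measure. -/
theorem parry_order_bound (β : ℝ) (hβ : IsPerron β)
    (hp : ¬ IsPisot β) (hs : ¬ IsSalem β) :
    (∀ n : ℕ, 1 ≤ n → IsParry (β ^ n) →
      (n : ℝ) ≤ (minpoly ℚ β).natDegree * Real.log ((1 + Real.sqrt 5) / 2) /
        (Real.log (mahlerMeasureOf β) - Real.log β)) ∧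
    ((minpoly ℚ β).natDegree * Real.log ((1 + Real.sqrt 5) / 2) /
        (Real.log (mahlerMeasureOf β) - Real.log β) < 1 → ¬ IsParry β) := by
  obtain ⟨hβ1, hint, hconj⟩ := hβ
  have h5 : Real.sqrt 5 ^ 2 = 5 := Real.sq_sqrt (by norm_num)
  have h5' : (1:ℝ) ≤ Real.sqrt 5 := by nlinarith [Real.sqrt_nonneg 5]
  set θ : ℝ := (1 + Real.sqrt 5)/2 with hθdef
  have hθ1 : (1:ℝ) < θ := by rw [hθdef]; nlinarith
  have hβ0 : (0:ℝ) < β := by linarith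
  have hintQ : IsIntegral ℚ β := hint.tower_top
  set q : Polynomial ℚ := minpoly ℚ β with hqdef
  have hq0 : q ≠ 0 := minpoly.ne_zero hintQ
  have hmap0 : q.map (algebraMap ℚ ℂ) ≠ 0 := Polynomial.map_ne_zero hq0
  set R : Multiset ℂ := (q.map (algebraMap ℚ ℂ)).roots with hRdef
  have hmemR : ∀ z : ℂ, z ∈ R ↔ Polynomial.aeval z q = 0 := by
    intro z
    rw [hRdef, Polynomial.mem_roots hmap0, Polynomial.IsRoot, Polynomial.eval_map,
      ← Polynomial.aeval_def]
  have hβroot : (β : ℂ) ∈ R := by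
    rw [hmemR]
    have : Polynomial.aeval ((algebraMap ℝ ℂ) β) q = (algebraMap ℝ ℂ) (Polynomial.aeval β q) :=
      Polynomial.aeval_algebraMap_apply ℂ β q
    rw [hqdef] at this ⊢
    simpa [minpoly.aeval] using this
  have hnodup : R.Nodup := by
    apply Polynomial.nodup_roots
    exact ((minpoly.irreducible hintQ).separable).map
  have hcard : Multiset.card R = q.natDegree := by
    rw [hRdef]
    rw [IsAlgClosed.card_roots_eq_natDegree, Polynomial.natDegree_map]
  set R' : Multiset ℂ := R.erase (β : ℂ) with hR'def
  have hRcons : R = (β : ℂ) ::ₘ R' := (Multiset.cons_erase hβroot).symm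
  have hmemR' : ∀ z : ℂ, z ∈ R' → Polynomial.aeval z q = 0 ∧ z ≠ (β : ℂ) := by
    intro z hzmem
    constructor
    · exact (hmemR z).mp (Multiset.mem_of_mem_erase hzmem)
    · exact (hnodup.mem_erase_iff.mp hzmem).1
  set P : ℝ := (R'.map (fun z => max 1 (‖z‖))).prod with hPdef
  have habsβ : ‖((β:ℝ):ℂ)‖ = β := by
    rw [Complex.norm_real, Real.norm_eq_abs, abs_of_pos hβ0]
  have hM : mahlerMeasureOf β = β * P := by
    rw [mahlerMeasureOf, ← hqdef, ← hRdef, hRcons, Multiset.map_cons, Multiset.prod_cons,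
      habsβ, max_eq_right hβ1.le, hPdef]
  have hone_le : ∀ x ∈ R'.map (fun z => max 1 (‖z‖)), (1:ℝ) ≤ x := by
    intro x hx
    obtain ⟨z, _, rfl⟩ := Multiset.mem_map.mp hx
    exact le_max_left _ _
  -- P > 1
  have hPgt : 1 < P := by
    have hex : ∃ z : ℂ, Polynomial.aeval z q = 0 ∧ z ≠ (β:ℂ) ∧ 1 < ‖z‖ := by
      by_cases hall : ∀ z : ℂ, Polynomial.aeval z q = 0 → z ≠ (β:ℂ) → ‖z‖ ≤ 1
      · exfalso
        rw [IsPisot] at hp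
        push_neg at hp
        obtain ⟨z₁, hz1, hz2, hz3⟩ := hp hβ1 hint
        exact hs ⟨hβ1, hint, hall, ⟨z₁, hz1, le_antisymm (hall z₁ hz1 hz2) hz3⟩⟩
      · push_neg at hall
        exact hall
    obtain ⟨z₁, h1, h2, h3⟩ := hex
    have hz1R' : z₁ ∈ R' := hnodup.mem_erase_iff.mpr ⟨h2, (hmemR z₁).mpr h1⟩
    have hmem : max 1 (‖z₁‖) ∈ R'.map (fun z => max 1 (‖z‖)) :=
      Multiset.mem_map_of_mem _ hz1R'
    have hle := le_msprod hone_le hmem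
    have hlt : 1 < max 1 (‖z₁‖) := lt_max_iff.mpr (Or.inr h3)
    rw [hPdef]
    linarith
  have hP0 : (0:ℝ) < P := by linarith
  have hlogP : 0 < Real.log P := Real.log_pos hPgt
  have hdiffeq : Real.log (mahlerMeasureOf β) - Real.log β = Real.log P := by
    rw [hM, Real.log_mul (ne_of_gt hβ0) (ne_of_gt hP0)]
    ring
  have hmain : ∀ n : ℕ, 1 ≤ n → IsParry (β ^ n) →
      (n : ℝ) ≤ (minpoly ℚ β).natDegree * Real.log θ /
        (Real.log (mahlerMeasureOf β) - Real.log β) := by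
    intro n hn hPar
    have hzbd : ∀ x ∈ R'.map (fun z => max 1 (‖z‖)), x ^ n ≤ θ := by
      intro x hx
      obtain ⟨z, hzmem, rfl⟩ := Multiset.mem_map.mp hx
      obtain ⟨hzq, hzne⟩ := hmemR' z hzmem
      have habs := hconj z hzq hzne
      rcases le_or_gt (‖z‖) 1 with h | h
      · rw [max_eq_left h, one_pow]; exact hθ1.le
      · rw [max_eq_right h.le]
        have hroot : Polynomial.aeval (z ^ n) (minpoly ℚ (β ^ n)) = 0 := root_pow n hzq
        have habsn : ‖z ^ n‖ < β ^ n := by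
          rw [norm_pow]
          exact pow_lt_pow_left₀ habs (norm_nonneg z) (by omega)
        have hne2 : z ^ n ≠ ((β ^ n : ℝ) : ℂ) := by
          intro hcontra
          rw [hcontra, Complex.norm_real, Real.norm_eq_abs, abs_of_pos (by positivity)] at habsn
          exact lt_irrefl _ habsn
        have hbd := parry_conj_bound hPar (z ^ n) hroot hne2
        rw [norm_pow] at hbd
        exact hbd
    have hprodpow : P ^ n ≤ θ ^ (Multiset.card R') := by
      have := msprod_pow_le n θ hθ1.le _ hone_le hzbd
      rwa [Multiset.card_map] at this
    have hcard' : Multiset.card R' ≤ q.natDegree := by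
      have hc2 : Multiset.card R = Multiset.card R' + 1 := by rw [hRcons]; simp
      omega
    have hθpow : θ ^ (Multiset.card R') ≤ θ ^ q.natDegree :=
      pow_le_pow_right₀ hθ1.le hcard'
    have hPn : (0:ℝ) < P ^ n := by positivity
    have hlogle : (n:ℝ) * Real.log P ≤ (q.natDegree : ℝ) * Real.log θ := by
      rw [← Real.log_pow, ← Real.log_pow]
      exact Real.log_le_log hPn (le_trans hprodpow hθpow)
    rw [hdiffeq, le_div_iff₀ hlogP]
    exact hlogle
  refine ⟨hmain, fun hlt hPar => ?_⟩
  have h1 := hmain 1 le_rfl (by rw [pow_one]; exact hPar)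
  rw [Nat.cast_one] at h1
  linarith
end

section
/- Let θ₀ = (1+√5)/2 be the golden ratio, let β be a Perron number that is neither a Pisot number nor a Salem number, and let γ ≠ β be a Galois conjugate of β with |γ| > 1. Then for every integer k with k ≥ log(θ₀)/log(|γ|) (equivalently, every k ≥ ⌈log(θ₀)/log(|γ|)⌉), the power β^k is not a Parry number. -/
open Filter Finset
set_option maxHeartbeats 1000000



lemma geomOdd {t : ℝ} (h0 : 0 ≤ t) (h1 : t < 1) :
    HasSum (fun n => if Odd n then t ^ n else 0) (t * (1 - t ^ 2)⁻¹) := by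
  have h2 : t ^ 2 < 1 := by nlinarith
  have h := (hasSum_geometric_of_lt_one (by positivity) h2).mul_left t
  have hinj : Function.Injective (fun j : ℕ => 2 * j + 1) := by
    intro a b hab; simp only at hab; omega
  rw [← hinj.hasSum_iff (f := fun n => if Odd n then t ^ n else 0)]
  · refine h.congr_fun fun j => ?_
    have hodd : Odd (2 * j + 1) := ⟨j, by ring⟩
    simp only [Function.comp_apply, hodd, if_true, pow_succ, pow_mul]
    ring
  · intro n hn
    have : ¬ Odd n := by
      rintro ⟨j, rfl⟩; exact hn ⟨j, by simp [two_mul]⟩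
    simp [this]

lemma solomyak_core (x : ℕ → ℝ) (z : ℂ) (hx0 : x 0 = 1) (hxnn : ∀ n, 0 ≤ x n)
    (hxle : ∀ n, x n ≤ 1) (hx1 : x 1 < 1) (hz0 : z ≠ 0)
    (hzle : ‖z‖ ≤ (Real.sqrt 5 - 1) / 2)
    (hsum : HasSum (fun n => (x n : ℂ) * z ^ n) 0) : False := by
  have hs5 : Real.sqrt 5 ^ 2 = 5 := Real.sq_sqrt (by norm_num)
  have hs5nn : 0 ≤ Real.sqrt 5 := Real.sqrt_nonneg 5
  have hs2 : 2 < Real.sqrt 5 := by nlinarith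
  have hs3 : Real.sqrt 5 < 3 := by nlinarith
  set c : ℝ := (Real.sqrt 5 - 1) / 2 with hc_def
  have hc0 : 0 < c := by simp only [hc_def]; linarith
  have hc1 : c < 1 := by simp only [hc_def]; linarith
  have hc2 : c ^ 2 = 1 - c := by simp only [hc_def]; nlinarith
  set t : ℝ := ‖z‖ with ht_def
  have ht0 : 0 < t := by simpa [ht_def] using norm_pos_iff.mpr hz0
  have htc : t ≤ c := hzle
  have ht1 : t < 1 := lt_of_le_of_lt htc hc1
  -- real part of the sum
  have hF : HasSum (fun n => x n * (z ^ n).re) (0 : ℝ) := by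
    have := Complex.reCLM.hasSum hsum
    simp only [map_zero] at this
    refine this.congr_fun fun n => ?_
    simp [Complex.re_ofReal_mul]
  have habs_r : ∀ n, |(z ^ n).re| ≤ t ^ n := fun n => by
    calc |(z ^ n).re| ≤ ‖z ^ n‖ := Complex.abs_re_le_norm _
    _ = t ^ n := by rw [norm_pow]
  by_cases hz : z = -((c : ℝ) : ℂ)
  · -- real negative extreme case
    have hreal : ∀ n, (z ^ n).re = (-c) ^ n := fun n => by
      rw [hz]
      rw [show -((c : ℝ) : ℂ) = ((-c : ℝ) : ℂ) by push_cast; ring]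
      rw [← Complex.ofReal_pow, Complex.ofReal_re]
    have hF' : HasSum (fun n => x n * (-c) ^ n) (0 : ℝ) := by
      refine hF.congr_fun fun n => by rw [hreal]
    have hE := geomOdd hc0.le hc1
    have hE1 : c * (1 - c ^ 2)⁻¹ = 1 := by
      rw [hc2, sub_sub_cancel, mul_inv_cancel₀ hc0.ne']
    rw [hE1] at hE
    have h0' : HasSum (fun n : ℕ => if n = 0 then (1 : ℝ) else 0) 1 := hasSum_ite_eq 0 1
    have h1' : HasSum (fun n : ℕ => if n = 1 then (c - x 1 * c) else 0) (c - x 1 * c) :=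
      hasSum_ite_eq 1 _
    have hG : HasSum (fun n : ℕ =>
        (if n = 0 then (1 : ℝ) else 0) + (if n = 1 then (c - x 1 * c) else 0)
          - (if Odd n then c ^ n else 0)) (1 + (c - x 1 * c) - 1) := (h0'.add h1').sub hE
    have hle : ∀ n : ℕ,
        (if n = 0 then (1 : ℝ) else 0) + (if n = 1 then (c - x 1 * c) else 0)
          - (if Odd n then c ^ n else 0) ≤ x n * (-c) ^ n := by
      intro n
      match n with
      | 0 => simp [hx0]
      | 1 =>
        have h1 : ((1:ℕ) = 0) = False := by simp
        have h2 : Odd 1 := odd_one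
        simp only [h1, if_false, if_pos rfl, h2, if_true, zero_add, pow_one]
        ring_nf
        linarith
      | (m+2) =>
        have hn0 : ¬ (m + 2 = 0) := by omega
        have hn1 : ¬ (m + 2 = 1) := by omega
        simp only [hn0, hn1, if_false, zero_add, zero_sub, add_zero]
        by_cases ho : Odd (m + 2)
        · simp only [ho, if_true]
          rw [ho.neg_pow, mul_neg]
          have : x (m + 2) * c ^ (m + 2) ≤ c ^ (m + 2) := by
            nlinarith [pow_nonneg hc0.le (m + 2), hxle (m + 2), hxnn (m + 2)]
          linarith
        · simp only [ho, if_false]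
          have he : Even (m + 2) := Nat.not_odd_iff_even.mp ho
          rw [he.neg_pow]
          simpa using mul_nonneg (hxnn (m + 2)) (pow_nonneg hc0.le (m + 2))
    have := hasSum_le hle hG hF'
    nlinarith [hx1, hc0]
  · -- generic case
    set a : ℝ := z.re with ha_def
    have him : a ^ 2 + z.im ^ 2 = t ^ 2 := by
      rw [ht_def, Complex.sq_norm, Complex.normSq_apply]; ring
    have ha_le : |a| ≤ t := Complex.abs_re_le_norm z
    have ha1 : -t ≤ a := (abs_le.mp ha_le).1
    have ha2 : a ≤ t := (abs_le.mp ha_le).2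
    have hcase : -t < a ∨ t < c := by
      by_contra h
      push_neg at h
      obtain ⟨h1, h2⟩ := h
      have haeq : a = -t := le_antisymm h1 ha1
      have hteq : t = c := le_antisymm htc h2
      apply hz
      have him0 : z.im = 0 := by nlinarith [sq_nonneg z.im]
      apply Complex.ext
      · simp [← ha_def, haeq, hteq]
      · simp [him0]
    have hN : (0:ℝ) < 1 - 2 * a + t ^ 2 := by nlinarith
    have h1t : (0:ℝ) < 1 - t := by linarith
    have hu_eq : (z * (1 - z)⁻¹).re = (a - t ^ 2) / (1 - 2 * a + t ^ 2) := by
      have hnsq : Complex.normSq (1 - z) = 1 - 2 * a + t ^ 2 := by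
        rw [Complex.normSq_apply]
        simp only [Complex.sub_re, Complex.sub_im, Complex.one_re, Complex.one_im]
        linear_combination him
      rw [← div_eq_mul_inv, Complex.div_re, hnsq]
      simp only [Complex.sub_re, Complex.sub_im, Complex.one_re, Complex.one_im]
      rw [← add_div]
      congr 1
      linear_combination -him
    have hznorm : ‖z‖ < 1 := by rw [← ht_def]; exact ht1
    have hgz : HasSum (fun n => z ^ (n + 1)) (z * (1 - z)⁻¹) := by
      have := (hasSum_geometric_of_norm_lt_one hznorm).mul_left z
      refine this.congr_fun fun n => by rw [pow_succ]; ring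
    have hgr : HasSum (fun n => (z ^ (n + 1)).re) ((z * (1 - z)⁻¹).re) :=
      Complex.reCLM.hasSum hgz
    have hgt : HasSum (fun n => t ^ (n + 1)) (t * (1 - t)⁻¹) := by
      have := (hasSum_geometric_of_lt_one ht0.le ht1).mul_left t
      refine this.congr_fun fun n => by rw [pow_succ]; ring
    have hL' : HasSum (fun n => ((z ^ (n + 1)).re - t ^ (n + 1)) / 2)
        (((z * (1 - z)⁻¹).re - t * (1 - t)⁻¹) / 2) := (hgr.sub hgt).div_const 2
    have hL'' : HasSum (fun n : ℕ =>
        if n + 1 = 0 then (1 : ℝ) else ((z ^ (n + 1)).re - t ^ (n + 1)) / 2)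
        (((z * (1 - z)⁻¹).re - t * (1 - t)⁻¹) / 2) :=
      hL'.congr_fun fun n => by norm_num
    have hL : HasSum (fun n : ℕ => if n = 0 then (1 : ℝ) else ((z ^ n).re - t ^ n) / 2)
        (((z * (1 - z)⁻¹).re - t * (1 - t)⁻¹) / 2 + 1) := by
      have hL0 := (hasSum_nat_add_iff
        (f := fun n : ℕ => if n = 0 then (1 : ℝ) else ((z ^ n).re - t ^ n) / 2) 1).mp hL''
      simpa using hL0
    have hle : ∀ n : ℕ, (if n = 0 then (1 : ℝ) else ((z ^ n).re - t ^ n) / 2)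
        ≤ x n * (z ^ n).re := by
      intro n
      match n with
      | 0 => simp [hx0]
      | (m+1) =>
        have hn0 : ¬ (m + 1 = 0) := by omega
        simp only [hn0, if_false]
        have h1 := (abs_le.mp (habs_r (m + 1))).1
        have h2 := (abs_le.mp (habs_r (m + 1))).2
        have htp : (0:ℝ) ≤ t ^ (m + 1) := by positivity
        rcases le_or_gt 0 ((z ^ (m + 1)).re) with hr | hr
        · have : 0 ≤ x (m+1) * (z ^ (m + 1)).re := mul_nonneg (hxnn _) hr
          linarith
        · have : x (m+1) * (z ^ (m + 1)).re ≥ (z ^ (m + 1)).re := by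
            nlinarith [hxle (m+1), hxnn (m+1)]
          linarith
    have hfin := hasSum_le hle hL hF
    have httc : t + t ^ 2 ≤ 1 := by
      have : t ^ 2 ≤ c ^ 2 := pow_le_pow_left₀ ht0.le htc 2
      nlinarith
    have key : t * (1 - t)⁻¹ - (z * (1 - z)⁻¹).re < 2 := by
      rw [hu_eq, ← div_eq_mul_inv,
        div_sub_div _ _ (ne_of_gt h1t) (ne_of_gt hN), div_lt_iff₀ (mul_pos h1t hN)]
      rcases hcase with hgt' | hlt'
      · nlinarith [mul_nonneg (by nlinarith : (0:ℝ) ≤ 1 - t - t^2) hN.le,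
          mul_pos (by linarith : (0:ℝ) < a + t) (mul_pos h1t h1t),
          (by linarith : (0:ℝ) < 1 + t)]
      · nlinarith [mul_pos (by nlinarith : (0:ℝ) < 1 - t - t^2) hN,
          mul_nonneg (by linarith : (0:ℝ) ≤ a + t) (mul_pos h1t h1t).le,
          (by linarith : (0:ℝ) < 1 + t)]
    linarith

lemma parry_main2 (b : ℝ) (g : ℂ) (x : ℕ → ℝ) (D : ℕ → ℤ) (Y : ℕ → ℂ)
    (hx0 : x 0 = 1) (hx1 : x 1 < 1) (hxnn : ∀ n, 0 ≤ x n) (hxle : ∀ n, x n ≤ 1)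
    (hxs : ∀ n, x (n + 1) = b * x n - D n)
    (hY0 : Y 0 = 1) (hYs : ∀ n, Y (n + 1) = g * Y n - (D n : ℂ))
    (m n : ℕ) (hmn : m < n) (hYmn : Y m = Y n) (hD : ∀ j, D (m + j) = D (n + j))
    (hg1 : 1 < ‖g‖) (hgle : (‖g‖)⁻¹ ≤ (Real.sqrt 5 - 1) / 2)
    (hgb : g ≠ (b : ℂ)) : False := by
  have hg0 : g ≠ 0 := by
    intro h; rw [h] at hg1; simp at hg1; linarith
  set z : ℂ := g⁻¹ with hz_def
  have hz0 : z ≠ 0 := inv_ne_zero hg0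
  have hzg : z * g = 1 := inv_mul_cancel₀ hg0
  have habsz : ‖z‖ = (‖g‖)⁻¹ := by rw [hz_def, norm_inv]
  have ht1 : ‖z‖ < 1 := by
    rw [habsz]; exact inv_lt_one_of_one_lt₀ hg1
  have ht0 : 0 ≤ ‖z‖ := norm_nonneg _
  -- periodicity of Y
  have hYper : ∀ j, Y (m + j) = Y (n + j) := by
    intro j
    induction j with
    | zero => simpa using hYmn
    | succ i ih =>
      have e1 : m + (i + 1) = (m + i) + 1 := by omega
      have e2 : n + (i + 1) = (n + i) + 1 := by omega
      rw [e1, e2, hYs, hYs, ih, hD i]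
  have hYvals : ∀ j, ∃ i, i ≤ n ∧ Y j = Y i := by
    intro j
    induction j using Nat.strong_induction_on with
    | _ j ih =>
      by_cases hj : j ≤ n
      · exact ⟨j, hj, rfl⟩
      · push_neg at hj
        have h1 : j = n + (j - n) := by omega
        have h2 : Y j = Y (m + (j - n)) := by
          conv_lhs => rw [h1]
          exact (hYper (j - n)).symm
        have h3 : m + (j - n) < j := by omega
        obtain ⟨i, hi, he⟩ := ih _ h3
        exact ⟨i, hi, h2.trans he⟩
  set M : ℝ := ∑ i ∈ Finset.range (n + 1), ‖Y i‖ with hM_def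
  have hM : ∀ j, ‖Y j‖ ≤ M := by
    intro j
    obtain ⟨i, hi, he⟩ := hYvals j
    rw [he]
    exact Finset.single_le_sum (f := fun i => ‖Y i‖)
      (fun i _ => norm_nonneg (Y i))
      (Finset.mem_range.mpr (Nat.lt_succ_of_le hi))
  -- partial sum identity
  have hps : ∀ mm, (1 : ℂ) - ∑ i ∈ Finset.range mm, (D i : ℂ) * z ^ (i + 1)
      = z ^ mm * Y mm := by
    intro mm
    induction mm with
    | zero => simp [hY0]
    | succ p ih =>
      rw [Finset.sum_range_succ, hYs]
      have h2 : z ^ (p + 1) * g = z ^ p := by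
        rw [pow_succ, mul_assoc, hzg, mul_one]
      calc (1 : ℂ) - (∑ i ∈ Finset.range p, (D i : ℂ) * z ^ (i + 1)
            + (D p : ℂ) * z ^ (p + 1))
          = (1 - ∑ i ∈ Finset.range p, (D i : ℂ) * z ^ (i + 1))
            - (D p : ℂ) * z ^ (p + 1) := by ring
        _ = z ^ p * Y p - (D p : ℂ) * z ^ (p + 1) := by rw [ih]
        _ = z ^ (p + 1) * g * Y p - (D p : ℂ) * z ^ (p + 1) := by rw [h2]
        _ = z ^ (p + 1) * (g * Y p - (D p : ℂ)) := by ring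
  -- second identity with S
  have hDx : ∀ i, (D i : ℂ) = (b : ℂ) * (x i : ℂ) - (x (i + 1) : ℂ) := by
    intro i
    have : (D i : ℝ) = b * x i - x (i + 1) := by rw [hxs i]; ring
    calc (D i : ℂ) = ((D i : ℝ) : ℂ) := by push_cast; ring
      _ = _ := by rw [this]; push_cast; ring
  have hiden : ∀ mm, (b : ℂ) * z * (∑ i ∈ Finset.range mm, (x i : ℂ) * z ^ i)
      - ((∑ i ∈ Finset.range (mm + 1), (x i : ℂ) * z ^ i)) = - (z ^ mm * Y mm) := by
    intro mm
    have hterm : ∀ i, (D i : ℂ) * z ^ (i + 1)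
        = (b : ℂ) * z * ((x i : ℂ) * z ^ i) - (x (i + 1) : ℂ) * z ^ (i + 1) := by
      intro i
      rw [hDx i, pow_succ]
      ring
    have e1 : ∑ i ∈ Finset.range mm, (D i : ℂ) * z ^ (i + 1)
        = (b : ℂ) * z * (∑ i ∈ Finset.range mm, (x i : ℂ) * z ^ i)
          - ((∑ i ∈ Finset.range (mm + 1), (x i : ℂ) * z ^ i) - 1) := by
      calc ∑ i ∈ Finset.range mm, (D i : ℂ) * z ^ (i + 1)
          = ∑ i ∈ Finset.range mm, ((b : ℂ) * z * ((x i : ℂ) * z ^ i)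
              - (x (i + 1) : ℂ) * z ^ (i + 1)) :=
            Finset.sum_congr rfl (fun i _ => hterm i)
        _ = ∑ i ∈ Finset.range mm, (b : ℂ) * z * ((x i : ℂ) * z ^ i)
              - ∑ i ∈ Finset.range mm, (x (i + 1) : ℂ) * z ^ (i + 1) :=
            Finset.sum_sub_distrib _ _
        _ = (b : ℂ) * z * (∑ i ∈ Finset.range mm, (x i : ℂ) * z ^ i)
              - ((∑ i ∈ Finset.range (mm + 1), (x i : ℂ) * z ^ i) - 1) := by
            rw [← Finset.mul_sum, Finset.sum_range_succ' (fun i => (x i : ℂ) * z ^ i) mm]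
            simp [hx0]
    have := hps mm
    rw [e1] at this
    linear_combination -this
  -- summability
  have hsummable : Summable (fun i => (x i : ℂ) * z ^ i) := by
    apply Summable.of_norm_bounded (g := fun i => (‖z‖) ^ i)
      (summable_geometric_of_lt_one ht0 ht1)
    intro i
    rw [norm_mul, norm_pow, Complex.norm_real, Real.norm_eq_abs]
    have : |x i| ≤ 1 := abs_le.mpr ⟨by linarith [hxnn i], hxle i⟩
    calc |x i| * ‖z‖ ^ i ≤ 1 * ‖z‖ ^ i := by
          apply mul_le_mul_of_nonneg_right this (by positivity)
      _ = _ := by ring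
  set H : ℂ := ∑' i, (x i : ℂ) * z ^ i with hH_def
  have hS : Tendsto (fun mm => ∑ i ∈ Finset.range mm, (x i : ℂ) * z ^ i) atTop (nhds H) :=
    hsummable.hasSum.tendsto_sum_nat
  have hS' : Tendsto (fun mm => ∑ i ∈ Finset.range (mm + 1), (x i : ℂ) * z ^ i)
      atTop (nhds H) := hS.comp (tendsto_add_atTop_nat 1)
  have hzY : Tendsto (fun mm => z ^ mm * Y mm) atTop (nhds 0) := by
    apply squeeze_zero_norm (a := fun mm => M * ‖z‖ ^ mm)
    · intro mm
      rw [norm_mul, norm_pow]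
      calc ‖z‖ ^ mm * ‖Y mm‖
          ≤ ‖z‖ ^ mm * M := by
            apply mul_le_mul_of_nonneg_left (hM mm) (by positivity)
        _ = M * ‖z‖ ^ mm := by ring
    · simpa using (tendsto_pow_atTop_nhds_zero_of_lt_one ht0 ht1).const_mul M
  have hkey : (b : ℂ) * z * H - H = 0 := by
    have h2 : Tendsto (fun mm => -(z ^ mm * Y mm)) atTop (nhds (-0)) := hzY.neg
    rw [neg_zero] at h2
    have h3 := (hS.const_mul ((b : ℂ) * z)).sub hS'
    have h4 : (fun mm => (b : ℂ) * z * (∑ i ∈ Finset.range mm, (x i : ℂ) * z ^ i)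
        - ((∑ i ∈ Finset.range (mm + 1), (x i : ℂ) * z ^ i)))
        = fun mm => -(z ^ mm * Y mm) := funext hiden
    rw [h4] at h3
    exact tendsto_nhds_unique h3 h2
  have hH0 : H = 0 := by
    have hfac : ((b : ℂ) * z - 1) * H = 0 := by linear_combination hkey
    rcases mul_eq_zero.mp hfac with h | h
    · exfalso
      have hone : (b : ℂ) * z = 1 := by linear_combination h
      have hb : (b : ℂ) = g := by
        calc (b : ℂ) = (b : ℂ) * (z * g) := by rw [hzg, mul_one]
          _ = ((b : ℂ) * z) * g := by ring
          _ = g := by rw [hone, one_mul]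
      exact hgb hb.symm
    · exact h
  have hfinal : HasSum (fun i => (x i : ℂ) * z ^ i) 0 := hH0 ▸ hsummable.hasSum
  exact solomyak_core x z hx0 hxnn hxle hx1 hz0 (habsz ▸ hgle) hfinal

noncomputable def parryPoly (k : ℕ) (D : ℕ → ℤ) : ℕ → Polynomial ℚ
  | 0 => 1
  | n + 1 => Polynomial.X ^ k * parryPoly k D n - Polynomial.C ((D n : ℚ))



/-- If `β` is Perron, neither Pisot nor Salem, and `γ ≠ β` is a conjugate of `β` with
`|γ| > 1`, then `β ^ k` is not Parry for every `k ≥ log θ₀ / log |γ|`. -/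
theorem pow_not_parry_of_large_conjugate (β : ℝ) (hβ : IsPerron β)
    (hp : ¬ IsPisot β) (hs : ¬ IsSalem β)
    (γ : ℂ) (hroot : Polynomial.aeval γ (minpoly ℚ β) = 0) (hne : γ ≠ (β : ℂ))
    (hγ : 1 < ‖γ‖) :
    ∀ k : ℕ, Real.log ((1 + Real.sqrt 5) / 2) / Real.log (‖γ‖) ≤ (k : ℝ) →
      ¬ IsParry (β ^ k) := by
  intro k hk hP
  obtain ⟨hb1, hfin⟩ := hP
  have hβ1 : 1 < β := hβ.1
  have hγβ : ‖γ‖ < β := hβ.2.2 γ hroot hne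
  have hs5 : Real.sqrt 5 ^ 2 = 5 := Real.sq_sqrt (by norm_num)
  have hs5nn : 0 ≤ Real.sqrt 5 := Real.sqrt_nonneg 5
  have hs2 : 2 < Real.sqrt 5 := by nlinarith
  have hθ1 : 1 < (1 + Real.sqrt 5) / 2 := by linarith
  have hlogr : 0 < Real.log (‖γ‖) := Real.log_pos hγ
  have hlogθ : 0 < Real.log ((1 + Real.sqrt 5) / 2) := Real.log_pos hθ1
  have hk0 : k ≠ 0 := by
    intro h
    rw [h] at hk
    simp only [Nat.cast_zero] at hk
    have := div_pos hlogθ hlogr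
    linarith
  -- θ ≤ |γ|^k
  have hθg : (1 + Real.sqrt 5) / 2 ≤ ‖γ‖ ^ k := by
    have h1 : Real.log ((1 + Real.sqrt 5) / 2) ≤ (k : ℝ) * Real.log (‖γ‖) := by
      rw [← div_le_iff₀ hlogr] at *; linarith
    rw [← Real.log_pow] at h1
    exact (Real.log_le_log_iff (by linarith) (by positivity)).mp h1
  have habsg : ‖γ ^ k‖ = ‖γ‖ ^ k := norm_pow _ _
  have hg1 : 1 < ‖γ ^ k‖ := by rw [habsg]; linarith
  have hginv : (‖γ ^ k‖)⁻¹ ≤ (Real.sqrt 5 - 1) / 2 := by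
    have h1 : (‖γ ^ k‖)⁻¹ ≤ ((1 + Real.sqrt 5) / 2)⁻¹ := by
      apply inv_anti₀ (by linarith)
      rw [habsg]; exact hθg
    have h2 : ((1 + Real.sqrt 5) / 2)⁻¹ = (Real.sqrt 5 - 1) / 2 :=
      inv_eq_of_mul_eq_one_right (by linear_combination hs5 / 4)
    rw [h2] at h1
    exact h1
  have hgb : γ ^ k ≠ ((β ^ k : ℝ) : ℂ) := by
    intro h
    have h1 : ‖γ‖ ^ k < β ^ k :=
      pow_lt_pow_left₀ hγβ (norm_nonneg _) hk0
    have h2 : ‖γ ^ k‖ = β ^ k := by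
      rw [h, Complex.norm_real, Real.norm_eq_abs, abs_of_pos (by linarith)]
    rw [habsg] at h2
    linarith
  -- the orbit and digits
  set x : ℕ → ℝ := fun n => (betaT (β ^ k))^[n] 1 with hx_def
  set D : ℕ → ℤ := fun n => ⌊β ^ k * x n⌋ with hD_def
  have hx0 : x 0 = 1 := rfl
  have hxs : ∀ n, x (n + 1) = β ^ k * x n - D n := by
    intro n
    rw [hx_def]
    simp only [Function.iterate_succ_apply']
    rfl
  have hxfr : ∀ n, x (n + 1) = Int.fract (β ^ k * x n) := fun n => hxs n
  have hxnn : ∀ n, 0 ≤ x n := by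
    intro n
    match n with
    | 0 => rw [hx0]; norm_num
    | (m+1) => rw [hxfr]; exact Int.fract_nonneg _
  have hxle : ∀ n, x n ≤ 1 := by
    intro n
    match n with
    | 0 => rw [hx0]
    | (m+1) => rw [hxfr]; exact (Int.fract_lt_one _).le
  have hx1 : x 1 < 1 := by rw [hxfr]; exact Int.fract_lt_one _
  -- finiteness gives repetition
  have hmem : ∀ j : ℕ, x (j + 1) ∈ {y : ℝ | ∃ n : ℕ, 1 ≤ n ∧ (betaT (β ^ k))^[n] 1 = y} :=
    fun j => ⟨j + 1, by omega, rfl⟩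
  have hninj : ¬ Function.Injective (fun j => x (j + 1)) := by
    intro hinj
    exact (Set.infinite_of_injective_forall_mem hinj hmem) hfin
  rw [Function.not_injective_iff] at hninj
  obtain ⟨i, j, hij, hne'⟩ := hninj
  -- wlog i < j
  obtain ⟨m', n', hmn', hxx⟩ : ∃ m' n', m' < n' ∧ x m' = x n' := by
    rcases hne'.lt_or_gt with h | h
    · exact ⟨i + 1, j + 1, by omega, hij⟩
    · exact ⟨j + 1, i + 1, by omega, hij.symm⟩
  -- evaluation of parryPoly
  have hevalβ : ∀ n, Polynomial.aeval β (parryPoly k D n) = x n := by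
    intro n
    induction n with
    | zero => simp [parryPoly, hx0]
    | succ p ih =>
      rw [parryPoly, map_sub, map_mul, map_pow, Polynomial.aeval_X, Polynomial.aeval_C, ih,
        hxs p]
      norm_num
  set Y : ℕ → ℂ := fun n => Polynomial.aeval γ (parryPoly k D n) with hY_def
  have hY0 : Y 0 = 1 := by simp [hY_def, parryPoly]
  have hYs : ∀ n, Y (n + 1) = γ ^ k * Y n - (D n : ℂ) := by
    intro n
    rw [hY_def]
    simp only []
    rw [parryPoly, map_sub, map_mul, map_pow, Polynomial.aeval_X, Polynomial.aeval_C]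
    norm_num
  -- transfer
  have hq0 : Polynomial.aeval β (parryPoly k D m' - parryPoly k D n') = 0 := by
    rw [map_sub, hevalβ m', hevalβ n', hxx, sub_self]
  obtain ⟨c, hc⟩ := minpoly.dvd ℚ β hq0
  have hYmn : Y m' = Y n' := by
    have h1 : Polynomial.aeval γ (parryPoly k D m' - parryPoly k D n') = 0 := by
      rw [hc, map_mul, hroot, zero_mul]
    rw [map_sub, sub_eq_zero] at h1
    exact h1
  -- digit periodicity
  have hxper : ∀ j, x (m' + j) = x (n' + j) := by
    intro j
    rw [hx_def]
    simp only []
    rw [Nat.add_comm m' j, Nat.add_comm n' j, Function.iterate_add_apply,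
      Function.iterate_add_apply]
    exact congrArg _ hxx
  have hDper : ∀ j, D (m' + j) = D (n' + j) := by
    intro j
    rw [hD_def]
    simp only []
    rw [hxper j]
  exact parry_main2 (β ^ k) (γ ^ k) x D Y hx0 hx1 hxnn hxle hxs hY0 hYs m' n' hmn' hYmn
    hDper hg1 hginv hgb
end

section
/- The set H₀ of Perron numbers β such that β^n is not a Parry number for every integer n ≥ 1 is dense in (1, ∞): for all real numbers u, v with 1 < u < v, there exists a Perron number β with u < β < v such that no positive power of β is a Parry number. -/
open Polynomial

lemma complex_eq_abs_of_abs_sub (w : ℂ) (r : ℝ) (hr : 0 < r)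
    (h : ‖w - (r:ℂ)‖ = ‖w‖ - r) : w = (‖w‖ : ℂ) := by
  have h1 : (‖w - (r:ℂ)‖)^2 = (‖w‖ - r)^2 := by rw [h]
  rw [Complex.sq_norm] at h1
  have h2 : Complex.normSq (w - (r:ℂ)) = (w.re - r)^2 + w.im^2 := by
    rw [Complex.normSq_apply]; simp [Complex.sub_re, Complex.sub_im]; ring
  have h3 : (‖w‖)^2 = w.re^2 + w.im^2 := by
    rw [Complex.sq_norm, Complex.normSq_apply]; ring
  have hre : w.re = ‖w‖ := by nlinarith [h1, h2, h3]
  have him2 : w.im^2 = 0 := by nlinarith [h1, h2, h3, hre]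
  have him : w.im = 0 := by
    have := sq_nonneg w.im
    nlinarith [him2]
  apply Complex.ext
  · simp [hre]
  · simp [him]

lemma key1 (w : ℂ) (r : ℝ) (hr : 0 ≤ r) : ‖w‖ - r ≤ ‖w - (r:ℂ)‖ := by
  have := norm_sub_norm_le w (r:ℂ)
  simpa [abs_of_nonneg hr] using this

lemma key2 (w : ℂ) (r : ℝ) (hr : 0 ≤ r) : r - ‖w‖ ≤ ‖w - (r:ℂ)‖ := by
  have := norm_sub_norm_le (r:ℂ) w
  have h2 : ‖(r:ℂ) - w‖ = ‖w - (r:ℂ)‖ := norm_sub_rev _ _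
  rw [h2] at this
  simpa [abs_of_nonneg hr] using this

lemma sq_le_imp {a b : ℝ} (hb : 0 ≤ b) (h : a^2 ≤ b^2) : a ≤ b := by nlinarith

lemma sq_lt_imp {a b : ℝ} (hb : 0 ≤ b) (h : a^2 < b^2) : a < b := by nlinarith

lemma helper_qp {x : ℝ} (h : 10 ≤ x) : 3*x + 3 ≤ x^2 + 1 := by nlinarith

lemma tail_pos {pp qq t tk vk : ℝ} (h1 : vk ≤ tk) (h2 : t ≤ tk) (h3 : pp + 2 < vk)
    (hq : 0 ≤ qq) (ht : 0 < t) : 0 < tk^2 - pp*tk + qq - t := by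
  have htk0 : 0 < tk := lt_of_lt_of_le ht h2
  have k1 : tk*vk ≤ tk*tk := mul_le_mul_of_nonneg_left h1 htk0.le
  have k2 : tk*(pp+2) < tk*vk := mul_lt_mul_of_pos_left h3 htk0
  nlinarith [k1, k2]

lemma eq_of_prod {a1 a2 b1 b2 : ℝ} (h1 : b1 ≤ a1) (h2 : b2 ≤ a2) (hb1 : 0 < b1)
    (hb2 : 0 < b2) (h : a1*a2 = b1*b2) : a1 = b1 ∧ a2 = b2 := by
  constructor <;> nlinarith

set_option maxHeartbeats 1600000 in
lemma exists_construction (u v : ℝ) (hu : 1 < u) (huv : u < v) :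
    ∃ (α β : ℝ) (g : Polynomial ℤ), g.Monic ∧
      Polynomial.aeval β g = 0 ∧ Polynomial.aeval α g = 0 ∧
      1 < α ∧ α < β ∧ u < β ∧ β < v ∧
      (∃ q : ℕ, q.Prime ∧ g.coeff 0 = (q : ℤ)) ∧
      (∀ z : ℂ, Polynomial.aeval z g = 0 → 1 < ‖z‖) ∧
      (∀ z : ℂ, Polynomial.aeval z g = 0 → z = (β : ℂ) ∨ ‖z‖ < β) := by
  have hu0 : (0:ℝ) < u := by linarith
  have hv1 : (1:ℝ) < v := by linarith
  have hvu : 1 < v / u := (one_lt_div hu0).2 huv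
  obtain ⟨k1, hk1⟩ := pow_unbounded_of_one_lt (10:ℝ) hu
  obtain ⟨k2, hk2⟩ := pow_unbounded_of_one_lt (12:ℝ) hvu
  set k := k1 + k2 with hkdef
  have hk0 : k ≠ 0 := by
    rintro hk
    have hk1' : k1 = 0 := by omega
    rw [hk1'] at hk1; norm_num at hk1
  have huk : (10:ℝ) < u ^ k := by
    have h1 : u ^ k1 ≤ u ^ k := pow_le_pow_right₀ (le_of_lt hu) (Nat.le_add_right _ _)
    linarith
  have huk1 : (1:ℝ) ≤ u ^ k := by linarith
  have hvuk : (12:ℝ) < (v/u) ^ k := by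
    have h1 : (v/u) ^ k2 ≤ (v/u) ^ k := pow_le_pow_right₀ (le_of_lt hvu) (Nat.le_add_left _ _)
    linarith
  have hupos : (0:ℝ) < u ^ k := pow_pos hu0 k
  have hvk12 : 12 * u ^ k < v ^ k := by
    have hveq : v ^ k = u ^ k * (v/u) ^ k := by
      rw [← mul_pow]; congr 1; field_simp
    have h2 : u ^ k * 12 < u ^ k * (v/u) ^ k := mul_lt_mul_of_pos_left hvuk hupos
    rw [hveq]; linarith
  -- the integer parameters
  obtain ⟨N, hXge, hXle⟩ : ∃ N : ℕ, u ^ k ≤ (N:ℝ) ∧ (N:ℝ) < u ^ k + 1 :=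
    ⟨⌈u ^ k⌉₊, Nat.le_ceil _, Nat.ceil_lt_add_one (by positivity)⟩
  have hX10 : (10:ℝ) < (N:ℝ) := lt_of_lt_of_le huk hXge
  have hX10' : 10 ≤ N := by exact_mod_cast hX10.le
  obtain ⟨q, hqprime, hq1, hq2⟩ := Nat.exists_prime_lt_and_le_two_mul (N^2)
    (by positivity)
  obtain ⟨p, hp2, hp1⟩ : ∃ p : ℕ, 4*q < p^2 ∧ (p-1)^2 ≤ 4*q :=
    ⟨Nat.sqrt (4*q) + 1, Nat.lt_succ_sqrt' (4*q), by simpa using Nat.sqrt_le' (4*q)⟩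
  -- cast to ℝ
  have hq1R : (N:ℝ)^2 + 1 ≤ (q:ℝ) := by
    have h : N^2 + 1 ≤ q := hq1
    exact_mod_cast h
  have hq2R : (q:ℝ) ≤ 2*(N:ℝ)^2 := by exact_mod_cast hq2
  have hp2R : 4*(q:ℝ) < (p:ℝ)^2 := by exact_mod_cast hp2
  have hp2R' : 4*(q:ℝ) + 1 ≤ (p:ℝ)^2 := by
    have : 4*q + 1 ≤ p^2 := hp2
    exact_mod_cast this
  have hppos : 1 ≤ p := by
    rcases Nat.eq_zero_or_pos p with h | h
    · rw [h] at hp2; simp at hp2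
    · exact h
  have hp1R : ((p:ℝ)-1)^2 ≤ 4*(q:ℝ) := by
    have h2 : (((p - 1 : ℕ) : ℝ))^2 ≤ 4*(q:ℝ) := by exact_mod_cast hp1
    rwa [Nat.cast_sub hppos, Nat.cast_one] at h2
  have hpX : 2*(N:ℝ) < (p:ℝ) := by
    have h1 : (2*(N:ℝ))^2 < (p:ℝ)^2 := by nlinarith [hq1R, hp2R]
    exact sq_lt_imp (by positivity) h1
  have hp3X : (p:ℝ) ≤ 3*(N:ℝ) + 1 := by
    have h1 : ((p:ℝ)-1)^2 < (3*(N:ℝ))^2 := by nlinarith [hp1R, hq2R, hX10]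
    have h2 : (p:ℝ) - 1 < 3*(N:ℝ) := sq_lt_imp (by positivity) h1
    linarith
  have hqp : (p:ℝ) + 2 ≤ (q:ℝ) := by
    have h := helper_qp hX10.le
    linarith [hq1R, hp3X]
  have hpv : (p:ℝ) + 2 < v ^ k := by linarith [huk, hXle, hvk12, hp3X]
  -- real quadratic roots
  set D : ℝ := (p:ℝ)^2 - 4*(q:ℝ) with hDdef
  have hD1 : 1 ≤ D := by rw [hDdef]; linarith
  have hD0 : 0 ≤ D := by linarith
  set s : ℝ := Real.sqrt D with hsdef
  have hs0 : 0 ≤ s := Real.sqrt_nonneg _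
  have hs2 : s^2 = D := Real.sq_sqrt hD0
  have hs1 : 1 ≤ s := by
    rw [hsdef, Real.one_le_sqrt]; exact hD1
  have hsp : s < (p:ℝ) - 2 := by
    rw [hsdef, Real.sqrt_lt' (by linarith : (0:ℝ) < (p:ℝ) - 2)]
    have hexp : ((p:ℝ)-2)^2 = (p:ℝ)^2 - 4*(p:ℝ) + 4 := by ring
    rw [hDdef, hexp]; linarith [hqp]
  set γ : ℝ := ((p:ℝ) + s)/2 with hγdef
  set δ : ℝ := ((p:ℝ) - s)/2 with hδdef
  have hsum : γ + δ = (p:ℝ) := by rw [hγdef, hδdef]; ring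
  have hprod : γ * δ = (q:ℝ) := by
    rw [hγdef, hδdef]
    have h1 : s^2 = (p:ℝ)^2 - 4*(q:ℝ) := by rw [hs2]
    linear_combination (-(1/4:ℝ)) * h1
  have hδ1 : 1 < δ := by rw [hδdef]; linarith
  have hδγ : δ < γ := by rw [hγdef, hδdef]; linarith
  have hγ1 : 1 < γ := lt_trans hδ1 hδγ
  have hγX : (N:ℝ) < γ := by rw [hγdef]; linarith
  have hγp : γ ≤ (p:ℝ) := by
    have hq0 : (0:ℝ) ≤ (q:ℝ) := Nat.cast_nonneg q
    have hsq : s^2 ≤ (p:ℝ)^2 := by rw [hs2, hDdef]; linarith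
    have : s ≤ (p:ℝ) := sq_le_imp (by positivity) hsq
    rw [hγdef]; linarith
  have hδ0 : (0:ℝ) < δ := by linarith
  have hγ0 : (0:ℝ) < γ := by linarith
  -- k-th roots
  set cδ : ℝ := δ ^ ((k:ℝ))⁻¹ with hcδdef
  set cγ : ℝ := γ ^ ((k:ℝ))⁻¹ with hcγdef
  have hcδk : cδ ^ k = δ := Real.rpow_inv_natCast_pow (le_of_lt hδ0) hk0
  have hcγk : cγ ^ k = γ := Real.rpow_inv_natCast_pow (le_of_lt hγ0) hk0
  have hkinv : (0:ℝ) < ((k:ℝ))⁻¹ := by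
    have : (0:ℝ) < (k:ℝ) := by exact_mod_cast Nat.pos_of_ne_zero hk0
    positivity
  have hcδ1 : 1 < cδ := by
    rw [hcδdef, Real.one_lt_rpow_iff (le_of_lt hδ0)]
    exact Or.inl ⟨hδ1, hkinv⟩
  have hcγ1 : 1 < cγ := by
    rw [hcγdef, Real.one_lt_rpow_iff (le_of_lt hγ0)]
    exact Or.inl ⟨hγ1, hkinv⟩
  have hcδγ : cδ < cγ := Real.rpow_lt_rpow (le_of_lt hδ0) hδγ hkinv
  have hucγ : u < cγ := by
    have h1 : ((u^k : ℝ)) ^ ((k:ℝ))⁻¹ = u := Real.pow_rpow_inv_natCast (le_of_lt hu0) hk0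
    have h2 : (u^k : ℝ) < γ := lt_of_le_of_lt hXge hγX
    calc u = ((u^k : ℝ)) ^ ((k:ℝ))⁻¹ := h1.symm
    _ < γ ^ ((k:ℝ))⁻¹ := Real.rpow_lt_rpow (by positivity) h2 hkinv
  have hγvk : γ < v ^ k := by linarith [hγp, hpv]
  have hcγv : cγ < v := by
    by_contra hcon
    push_neg at hcon
    have : v ^ k ≤ cγ ^ k := pow_le_pow_left₀ (by linarith) hcon k
    rw [hcγk] at this; linarith
  -- the real function φ
  set φ : ℝ → ℝ := fun t => t^(2*k) - (p:ℝ) * t^k + (q:ℝ) - t with hφdef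
  have hφc : Continuous φ := by rw [hφdef]; continuity
  have hfact : ∀ t : ℝ, (t^k - γ) * (t^k - δ) = t^(2*k) - (p:ℝ)*t^k + (q:ℝ) := by
    intro t
    have h3 : t^(2*k) = (t^k)^2 := by rw [← pow_mul, mul_comm]
    rw [h3]
    linear_combination (-(t^k)) * hsum + hprod
  have hφalt : ∀ t : ℝ, φ t = (t^k - γ) * (t^k - δ) - t := by
    intro t; rw [hφdef]; simp only []; rw [← hfact]
  have hφ1 : φ 1 = (q:ℝ) - (p:ℝ) := by rw [hφdef]; simp; ring
  have hφcδ : φ cδ = -cδ := by rw [hφalt, hcδk]; ring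
  have hφcγ : φ cγ = -cγ := by rw [hφalt, hcγk]; ring
  have hq0R : (0:ℝ) ≤ (q:ℝ) := Nat.cast_nonneg q
  have htail : ∀ t : ℝ, v ≤ t → 0 < φ t := by
    intro t ht
    have ht1 : (1:ℝ) < t := by linarith
    have h1 : v ^ k ≤ t ^ k := pow_le_pow_left₀ (by linarith) ht k
    have h2 : t ≤ t ^ k := le_self_pow₀ (by linarith) hk0
    have h3 : t^(2*k) = (t^k)^2 := by rw [← pow_mul, mul_comm]
    rw [hφdef]; simp only []
    rw [h3]
    exact tail_pos h1 h2 hpv hq0R (by linarith)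
  have hφv : 0 < φ v := htail v le_rfl
  -- second real root α
  have hIVTα := intermediate_value_Ioo' (le_of_lt hcδ1) hφc.continuousOn
  have h0mem : (0:ℝ) ∈ Set.Ioo (φ cδ) (φ 1) := by
    rw [hφcδ, hφ1]
    exact ⟨by linarith, by linarith⟩
  obtain ⟨α, hαmem, hφα⟩ := hIVTα h0mem
  -- root β₀ above cγ
  have hIVTβ := intermediate_value_Ioo (le_of_lt hcγv) hφc.continuousOn
  have h0mem' : (0:ℝ) ∈ Set.Ioo (φ cγ) (φ v) := by
    rw [hφcγ]
    exact ⟨by linarith, by linarith⟩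
  obtain ⟨β₀, hβ₀mem, hφβ₀⟩ := hIVTβ h0mem'
  -- β := largest root
  set Sset : Set ℝ := {t : ℝ | φ t = 0} ∩ Set.Icc 1 v with hSdef
  have hclosed : IsClosed Sset := ((isClosed_singleton.preimage hφc)).inter isClosed_Icc
  have hcomp : IsCompact Sset :=
    IsCompact.of_isClosed_subset isCompact_Icc hclosed Set.inter_subset_right
  have hβ₀S : β₀ ∈ Sset :=
    ⟨hφβ₀, ⟨by linarith [hβ₀mem.1, hcγ1], le_of_lt hβ₀mem.2⟩⟩
  have hne : Sset.Nonempty := ⟨β₀, hβ₀S⟩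
  set β : ℝ := sSup Sset with hβdef
  have hβS : β ∈ Sset := hcomp.sSup_mem hne
  have hφβ : φ β = 0 := hβS.1
  have hββ₀ : β₀ ≤ β := le_csSup hcomp.bddAbove hβ₀S
  have hβv : β < v := by
    rcases lt_or_eq_of_le hβS.2.2 with h | h
    · exact h
    · exfalso; rw [h] at hφβ; linarith
  have hcγβ : cγ < β := lt_of_lt_of_le hβ₀mem.1 hββ₀
  have huβ : u < β := lt_trans hucγ hcγβ
  have hβ1 : 1 < β := lt_trans hcγ1 hcγβ
  have hβmax : ∀ t : ℝ, β < t → 0 < φ t := by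
    intro t ht
    by_contra hcon
    push_neg at hcon
    have htv : t < v := by
      by_contra h2
      push_neg at h2
      linarith [htail t h2]
    have hIVT := intermediate_value_Icc (le_of_lt htv) hφc.continuousOn
    obtain ⟨r, hrmem, hφr⟩ := hIVT ⟨hcon, le_of_lt hφv⟩
    have hrS : r ∈ Sset := ⟨hφr, ⟨by linarith [hrmem.1], hrmem.2⟩⟩
    have : r ≤ β := le_csSup hcomp.bddAbove hrS
    linarith [hrmem.1]
  have hβkγ : γ < β ^ k := by
    have := pow_lt_pow_left₀ hcγβ (by linarith : (0:ℝ) ≤ cγ) hk0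
    rwa [hcγk] at this
  have hβeq : (β^k - γ) * (β^k - δ) = β := by
    have h := hφalt β
    rw [hφβ] at h
    linarith
  -- the polynomial
  set g : Polynomial ℤ := X^(2*k) - (C (p:ℤ) * X^k + X - C (q:ℤ)) with hgdef
  have hdegtail : (C (p:ℤ) * X^k + X - C (q:ℤ)).degree < ((2*k : ℕ) : WithBot ℕ) := by
    have hk2k : (k : WithBot ℕ) < ((2*k : ℕ) : WithBot ℕ) := by
      rw [Nat.cast_lt]
      have := Nat.pos_of_ne_zero hk0
      omega
    have h1k : (1 : WithBot ℕ) ≤ (k : WithBot ℕ) := by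
      rw [show ((1:WithBot ℕ)) = ((1:ℕ) : WithBot ℕ) from rfl, Nat.cast_le]
      exact Nat.pos_of_ne_zero hk0
    apply lt_of_le_of_lt (degree_sub_le _ _)
    rw [sup_lt_iff]
    refine ⟨lt_of_le_of_lt (degree_add_le _ _) ?_, ?_⟩
    · rw [sup_lt_iff]
      refine ⟨lt_of_le_of_lt (degree_C_mul_X_pow_le k (p:ℤ)) hk2k, ?_⟩
      exact lt_of_le_of_lt degree_X_le (lt_of_le_of_lt h1k hk2k)
    · exact lt_of_le_of_lt degree_C_le (lt_of_le_of_lt (by norm_num) (lt_of_le_of_lt h1k hk2k))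
  have hgmonic : g.Monic := monic_X_pow_sub hdegtail
  have h2k0 : 2*k ≠ 0 := Nat.mul_ne_zero (by norm_num) hk0
  have hgcoeff : g.coeff 0 = (q:ℤ) := by
    rw [hgdef]
    simp [coeff_X_pow, h2k0, hk0, coeff_C]
    exact fun h => absurd h.symm hk0
  have hgevalR : ∀ t : ℝ, Polynomial.aeval t g = φ t := by
    intro t
    rw [hgdef, hφdef]
    simp only [map_sub, map_add, map_mul, map_pow, map_natCast, aeval_X, aeval_C]
    push_cast
    ring
  have hgevalC : ∀ z : ℂ, Polynomial.aeval z g = z^(2*k) - (p:ℂ)*z^k - z + (q:ℂ) := by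
    intro z
    rw [hgdef]
    simp only [map_sub, map_add, map_mul, map_pow, map_natCast, aeval_X, aeval_C]
    push_cast
    ring
  -- root location over ℂ
  have hroots : ∀ z : ℂ, Polynomial.aeval z g = 0 →
      (1 < ‖z‖ ∧ (z = (β : ℂ) ∨ ‖z‖ < β)) := by
    intro z hz
    rw [hgevalC z] at hz
    have hsumC : (γ:ℂ) + (δ:ℂ) = (p:ℂ) := by exact_mod_cast hsum
    have hprodC : (γ:ℂ) * (δ:ℂ) = (q:ℂ) := by exact_mod_cast hprod
    have hEq : (z^k - (γ:ℂ)) * (z^k - (δ:ℂ)) = z := by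
      have h3 : z^(2*k) = (z^k)^2 := by rw [← pow_mul, mul_comm]
      rw [h3] at hz
      linear_combination hz - (z^k) * hsumC + hprodC
    set t := ‖z‖ with htdef
    have ht0 : 0 ≤ t := norm_nonneg z
    set a1 := ‖z^k - (γ:ℂ)‖ with ha1def
    set a2 := ‖z^k - (δ:ℂ)‖ with ha2def
    have ha10 : 0 ≤ a1 := norm_nonneg _
    have ha20 : 0 ≤ a2 := norm_nonneg _
    have habs : a1 * a2 = t := by
      rw [ha1def, ha2def, htdef, ← norm_mul, hEq]
    have htk : ‖z ^ k‖ = t ^ k := by rw [htdef, norm_pow]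
    have ht1 : 1 < t := by
      by_contra hcon
      push_neg at hcon
      have htk1 : t^k ≤ 1 := pow_le_one₀ ht0 hcon
      have e1 : γ - t^k ≤ a1 := by rw [ha1def, ← htk]; exact key2 _ _ hγ0.le
      have e2 : δ - t^k ≤ a2 := by rw [ha2def, ← htk]; exact key2 _ _ hδ0.le
      have e5 : (γ-1)*(δ-1) ≤ a1*a2 := by
        calc (γ-1)*(δ-1) ≤ (γ - t^k)*(δ - t^k) :=
              mul_le_mul (by linarith) (by linarith) (by linarith) (by linarith)
        _ ≤ a1 * a2 := mul_le_mul e1 e2 (by linarith) (by linarith)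
      have e6 : (γ-1)*(δ-1) = (q:ℝ) - (p:ℝ) + 1 := by linear_combination hprod - hsum
      rw [habs, e6] at e5
      linarith [hqp]
    refine ⟨ht1, ?_⟩
    rcases lt_trichotomy t β with hc | hc | hc
    · right; exact hc
    · left
      have htkβ : ‖z^k‖ = β^k := by rw [htk, hc]
      have hb1 : 0 < β^k - γ := by linarith
      have hb2 : 0 < β^k - δ := by linarith
      have e1 : β^k - γ ≤ a1 := by rw [ha1def, ← htkβ]; exact key1 _ _ hγ0.le
      have e2 : β^k - δ ≤ a2 := by rw [ha2def, ← htkβ]; exact key1 _ _ hδ0.le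
      have hprodeq : a1 * a2 = (β^k - γ)*(β^k - δ) := by rw [habs, hc, hβeq]
      obtain ⟨ea1, ea2⟩ := eq_of_prod e1 e2 hb1 hb2 hprodeq
      have hzk : z^k = ((β^k : ℝ) : ℂ) := by
        have h := complex_eq_abs_of_abs_sub (z^k) γ hγ0 (by rw [← ha1def, ea1, htkβ])
        rw [h, htkβ]
      have hcast : ((β^k - γ : ℝ):ℂ) * ((β^k - δ : ℝ):ℂ) = ((β:ℝ):ℂ) := by
        exact_mod_cast hβeq
      rw [← hEq, hzk]
      push_cast at hcast ⊢
      linear_combination hcast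
    · exfalso
      have hβk : β^k ≤ t^k := pow_le_pow_left₀ (by linarith) hc.le k
      have htkγ : γ < t^k := lt_of_lt_of_le hβkγ hβk
      have e1 : t^k - γ ≤ a1 := by rw [ha1def, ← htk]; exact key1 _ _ hγ0.le
      have e2 : t^k - δ ≤ a2 := by rw [ha2def, ← htk]; exact key1 _ _ hδ0.le
      have e5 : (t^k - γ)*(t^k - δ) ≤ a1*a2 :=
        mul_le_mul e1 e2 (by linarith) (by linarith)
      have hφt := hβmax t hc
      have halt := hφalt t
      rw [habs] at e5
      linarith
  refine ⟨α, β, g, hgmonic, ?_, ?_, hαmem.1, ?_, huβ, hβv, ⟨q, hqprime, hgcoeff⟩,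
    fun z hz => (hroots z hz).1, fun z hz => (hroots z hz).2⟩
  · rw [hgevalR]; exact hφβ
  · rw [hgevalR]; exact hφα
  · exact lt_trans (lt_trans hαmem.2 hcδγ) hcγβ


lemma multiset_prod_gt (s : Multiset ℝ) (h1 : ∀ x ∈ s, 1 < x) (hne : s ≠ 0) : 1 < s.prod := by
  obtain ⟨a, ha⟩ := Multiset.exists_mem_of_ne_zero hne
  obtain ⟨t, rfl⟩ := Multiset.exists_cons_of_mem ha
  rw [Multiset.prod_cons]
  have ha1 : 1 < a := h1 a (Multiset.mem_cons_self _ _)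
  have ht1 : 1 ≤ t.prod := Multiset.one_le_prod (fun x hx => le_of_lt (h1 x (Multiset.mem_cons_of_mem hx)))
  nlinarith

lemma not_isUnit_coeff (g h : Polynomial ℤ) (hm : h.Monic) (hdeg : h.natDegree ≠ 0)
    (hdvd : h ∣ g) (hroots : ∀ z : ℂ, Polynomial.aeval z g = 0 → 1 < ‖z‖) :
    ¬ IsUnit (h.coeff 0) := by
  intro hunit
  set hC : Polynomial ℂ := h.map (Int.castRingHom ℂ) with hCdef
  have hCmonic : hC.Monic := hm.map _
  have hdegC : hC.natDegree = h.natDegree := hm.natDegree_map _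
  have hsplits : hC.Splits := IsAlgClosed.splits _
  have hcard : Multiset.card hC.roots = h.natDegree := by
    rw [← hdegC]; exact (splits_iff_card_roots).1 hsplits
  have hcoeff := hsplits.coeff_zero_eq_prod_roots_of_monic hCmonic
  have hrootsh : ∀ x ∈ hC.roots, 1 < ‖x‖ := by
    intro x hx
    have hx0 : hC ≠ 0 := hCmonic.ne_zero
    have hxr : IsRoot hC x := (mem_roots hx0).1 hx
    obtain ⟨e, rfl⟩ := hdvd
    apply hroots
    have h1 : Polynomial.aeval x h = 0 := by
      rw [aeval_def, ← eval_map]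
      exact hxr
    rw [map_mul, h1, zero_mul]
  -- compute abs of coeff 0
  have habs : ‖hC.coeff 0‖ = (hC.roots.map (fun x => ‖x‖)).prod := by
    rw [hcoeff]
    rw [norm_mul, norm_pow]
    simpa using map_multiset_prod (normHom : ℂ →*₀ ℝ) hC.roots
  have hgt : 1 < (hC.roots.map (fun x => ‖x‖)).prod := by
    apply multiset_prod_gt
    · intro x hx
      obtain ⟨y, hy, rfl⟩ := Multiset.mem_map.1 hx
      exact hrootsh y hy
    · intro hc
      rw [Multiset.map_eq_zero] at hc
      rw [hc] at hcard
      simp at hcard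
      exact hdeg hcard.symm
  have hc0 : hC.coeff 0 = ((h.coeff 0 : ℤ) : ℂ) := by rw [hCdef, coeff_map]; rfl
  rcases Int.isUnit_iff.1 hunit with h1 | h1 <;>
    rw [hc0, h1] at habs <;> simp at habs <;> linarith [hgt, habs.symm ▸ hgt]

lemma minpoly_eq_g {β : ℝ} (g : Polynomial ℤ) (hg : g.Monic)
    (hroot : Polynomial.aeval β g = 0)
    (hprime : ∃ q : ℕ, q.Prime ∧ g.coeff 0 = (q : ℤ))
    (hroots : ∀ z : ℂ, Polynomial.aeval z g = 0 → 1 < ‖z‖) :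
    minpoly ℤ β = g := by
  obtain ⟨q, hq, hgc⟩ := hprime
  have hint : IsIntegral ℤ β := ⟨g, hg, by rwa [← aeval_def]⟩
  have hdvd : minpoly ℤ β ∣ g := minpoly.isIntegrallyClosed_dvd hint hroot
  obtain ⟨e, hfact⟩ := hdvd
  have hmm : (minpoly ℤ β).Monic := minpoly.monic hint
  have hem : e.Monic := hmm.of_mul_monic_left (hfact ▸ hg)
  have hcoeffs : (q : ℤ) = (minpoly ℤ β).coeff 0 * e.coeff 0 := by
    rw [← hgc, hfact, mul_coeff_zero]
  have hqirr : Irreducible (q : ℤ) := (Nat.prime_iff_prime_int.mp hq).irreducible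
  have hmincoeff : ¬ IsUnit ((minpoly ℤ β).coeff 0) := by
    apply not_isUnit_coeff g _ hmm (by have := minpoly.natDegree_pos hint; omega) ⟨e, hfact⟩ hroots
  rcases hqirr.isUnit_or_isUnit hcoeffs with h | h
  · exact absurd h hmincoeff
  · -- e has unit constant coeff, so e is constant
    have hedeg : e.natDegree = 0 := by
      by_contra hdeg
      exact not_isUnit_coeff g e hem hdeg ⟨minpoly ℤ β, by rw [hfact, mul_comm]⟩ hroots h
    have he1 : e = 1 := hem.natDegree_eq_zero.1 hedeg
    rw [hfact, he1, mul_one]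


open Polynomial in
lemma not_isParry_of_conj {A B : ℝ} (hA : 1 < A) (hAB : A < B)
    (hconj : ∀ F : Polynomial ℤ, Polynomial.aeval B F = 0 → Polynomial.aeval A F = 0) :
    ¬ IsParry B := by
  rintro ⟨hB1, hfin⟩
  set x : ℕ → ℝ := fun k => (betaT B)^[k] 1 with hxdef
  set d : ℕ → ℤ := fun k => ⌊B * x k⌋ with hddef
  -- the polynomial certificates
  let P : ℕ → Polynomial ℤ := fun k => Nat.rec 1 (fun k Pk => X * Pk - C (d k)) k
  have hP0 : P 0 = 1 := rfl
  have hPsucc : ∀ k, P (k+1) = X * P k - C (d k) := fun k => rfl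
  set y : ℕ → ℝ := fun k => Polynomial.aeval A (P k) with hydef
  have hxsucc : ∀ k, x (k+1) = B * x k - d k := by
    intro k
    have : x (k+1) = betaT B (x k) := Function.iterate_succ_apply' (betaT B) k 1
    rw [this]; rfl
  have hPx : ∀ k, Polynomial.aeval B (P k) = x k := by
    intro k
    induction k with
    | zero => simp [hP0, hxdef]
    | succ k ih => rw [hPsucc, hxsucc]; simp [ih]
  have hy0 : y 0 = 1 := by simp [hydef, hP0]
  have hysucc : ∀ k, y (k+1) = A * y k - d k := by
    intro k; simp [hydef, hPsucc]
  have hkey : ∀ j k, x j = x k → y j = y k := by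
    intro j k hjk
    have h0 : Polynomial.aeval B (P j - P k) = 0 := by
      simp [map_sub, hPx, hjk]
    have h1 := hconj _ h0
    simpa [map_sub, sub_eq_zero, hydef] using h1
  have hx0 : ∀ k, 0 ≤ x k := by
    intro k
    cases k with
    | zero => norm_num [hxdef]
    | succ k =>
        have : x (k+1) = Int.fract (B * x k) := by rw [hxsucc]; rfl
        rw [this]; exact Int.fract_nonneg _
  have hx1 : ∀ k, x k ≤ 1 := by
    intro k
    cases k with
    | zero => norm_num [hxdef]
    | succ k =>
        have : x (k+1) = Int.fract (B * x k) := by rw [hxsucc]; rfl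
        rw [this]; exact le_of_lt (Int.fract_lt_one _)
  -- growth of z = x - y
  have hzsucc : ∀ k, x (k+1) - y (k+1) = A * (x k - y k) + (B - A) * x k := by
    intro k; rw [hxsucc, hysucc]; ring
  have hz : ∀ m : ℕ, A ^ m * (B - A) ≤ x (m+1) - y (m+1) := by
    intro m
    induction m with
    | zero =>
        have hx00 : x 0 = 1 := by norm_num [hxdef]
        rw [hzsucc, hx00, hy0]; norm_num
    | succ m ih =>
        rw [hzsucc (m+1), pow_succ]
        have h1 : 0 ≤ (B - A) * x (m+1) := by
          have := hx0 (m+1); nlinarith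
        have h2 : A ^ m * (B - A) * A ≤ (x (m+1) - y (m+1)) * A := by
          have hA0 : (0:ℝ) < A := by linarith
          exact mul_le_mul_of_nonneg_right ih (le_of_lt hA0)
        nlinarith
  -- finiteness gives boundedness of the y's
  classical
  set S := {x : ℝ | ∃ n : ℕ, 1 ≤ n ∧ (betaT B)^[n] 1 = x} with hSdef
  let f : ℝ → ℝ := fun s => if h : ∃ kk : ℕ, 1 ≤ kk ∧ x kk = s then y h.choose else 0
  have hfx : ∀ m, 1 ≤ m → f (x m) = y m := by
    intro m hm
    have hex : ∃ kk : ℕ, 1 ≤ kk ∧ x kk = x m := ⟨m, hm, rfl⟩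
    simp only [f, dif_pos hex]
    exact hkey _ _ hex.choose_spec.2
  have hsub : {t : ℝ | ∃ m : ℕ, 1 ≤ m ∧ y m = t} ⊆ f '' S := by
    rintro t ⟨m, hm, rfl⟩
    exact ⟨x m, ⟨m, hm, rfl⟩, hfx m hm⟩
  have hYfin : (f '' S).Finite := hfin.image f
  obtain ⟨b, hb⟩ := hYfin.bddBelow
  have hbound : ∀ m : ℕ, b ≤ 1 - A ^ m * (B - A) := by
    intro m
    have h1 : b ≤ y (m+1) := hb (hsub ⟨m+1, by omega, rfl⟩)
    have h2 := hz m
    have h3 := hx1 (m+1)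
    linarith
  obtain ⟨m, hm⟩ := pow_unbounded_of_one_lt ((1 - b)/(B - A)) hA
  have hBA : (0:ℝ) < B - A := by linarith
  have := hbound m
  rw [div_lt_iff₀ hBA] at hm
  linarith


/-- The set `H₀` of Perron numbers none of whose positive powers is Parry is dense
in `(1, ∞)`. -/
theorem H_zero_dense :
    ∀ u v : ℝ, 1 < u → u < v →
      ∃ β : ℝ, u < β ∧ β < v ∧ IsPerron β ∧ ∀ n : ℕ, 1 ≤ n → ¬ IsParry (β ^ n) := by
  intro u v hu huv
  obtain ⟨α, β, g, hgmonic, hrootβ, hrootα, hα1, hαβ, huβ, hβv, hpr, habs1, hlocβ⟩ :=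
    exists_construction u v hu huv
  have hβ1 : 1 < β := lt_trans hα1 hαβ
  have hint : IsIntegral ℤ β := ⟨g, hgmonic, by rwa [← aeval_def]⟩
  have hminZ : minpoly ℤ β = g := minpoly_eq_g g hgmonic hrootβ hpr habs1
  have hdvdall : ∀ F : Polynomial ℤ, Polynomial.aeval β F = 0 → Polynomial.aeval α F = 0 := by
    intro F hF
    have hdvd : minpoly ℤ β ∣ F := minpoly.isIntegrallyClosed_dvd hint hF
    rw [hminZ] at hdvd
    obtain ⟨e, rfl⟩ := hdvd
    rw [map_mul, hrootα, zero_mul]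
  refine ⟨β, huβ, hβv, ⟨hβ1, hint, ?_⟩, ?_⟩
  · intro z hz hne
    have hminQ : minpoly ℚ β = (minpoly ℤ β).map (algebraMap ℤ ℚ) :=
      minpoly.isIntegrallyClosed_eq_field_fractions' ℚ hint
    rw [hminQ, hminZ, aeval_map_algebraMap] at hz
    rcases hlocβ z hz with h | h
    · exact absurd h hne
    · exact h
  · intro n hn
    apply not_isParry_of_conj (hA := ?_) (hAB := ?_)
    · intro F hF
      have hG : Polynomial.aeval β (F.comp (Polynomial.X ^ n)) = 0 := by
        rw [aeval_comp]; simpa using hF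
      have h2 := hdvdall _ hG
      rw [aeval_comp] at h2
      simpa using h2
    · exact one_lt_pow₀ hα1 (by omega)
    · exact pow_lt_pow_left₀ hαβ (by linarith) (by omega)
end

section
/- If there exists an integer n ≥ 1 such that the set H_n of Perron numbers of Parry order exactly n is dense in (1, ∞), then the set H₁ of Perron numbers of Parry order exactly 1 is also dense in (1, ∞). -/
open scoped IntermediateField

theorem isPerron_pow {β : ℝ} (hp : (1:ℝ) < β ∧ IsIntegral ℤ β ∧
    ∀ z : ℂ, Polynomial.aeval z (minpoly ℚ β) = 0 → z ≠ (β : ℂ) → ‖z‖ < β)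
    {n : ℕ} (hn : 1 ≤ n) : (1:ℝ) < β ^ n ∧ IsIntegral ℤ (β ^ n) ∧
    ∀ z : ℂ, Polynomial.aeval z (minpoly ℚ (β ^ n)) = 0 → z ≠ ((β ^ n : ℝ) : ℂ) →
      ‖z‖ < β ^ n := by
  obtain ⟨hβ1, hint, hconj⟩ := hp
  have hnz : n ≠ 0 := by omega
  refine ⟨one_lt_pow₀ hβ1 hnz, hint.pow n, ?_⟩
  intro z hz hne
  have hintQ : IsIntegral ℚ β := hint.tower_top
  set L := ℚ⟮β⟯
  haveI : FiniteDimensional ℚ L := IntermediateField.adjoin.finiteDimensional hintQ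
  haveI : NumberField L := ⟨⟩
  set b : L := IntermediateField.AdjoinSimple.gen ℚ β with hb
  have hmap : algebraMap L ℝ b = β := rfl
  have hinj : Function.Injective (algebraMap L ℝ) := (algebraMap L ℝ).injective
  have hminb : minpoly ℚ (β ^ n) = minpoly ℚ (b ^ n) := by
    rw [← hmap, ← map_pow, minpoly.algebraMap_eq hinj]
  have hminb' : minpoly ℚ β = minpoly ℚ b := by
    rw [← hmap, minpoly.algebraMap_eq hinj]
  have hbint : IsIntegral ℚ b := (IntermediateField.AdjoinSimple.isIntegral_gen ℚ β).mpr hintQ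
  have hzroot : z ∈ (minpoly ℚ (b ^ n)).rootSet ℂ := by
    rw [Polynomial.mem_rootSet]
    exact ⟨minpoly.ne_zero (hbint.pow n), by rwa [hminb] at hz⟩
  obtain ⟨φ, hφ⟩ := (NumberField.Embeddings.range_eval_eq_rootSet_minpoly L ℂ (b ^ n)).symm.subset hzroot
  -- z = φ (b^n) = (φ b)^n
  have hz' : z = (φ b) ^ n := by simp only [← hφ]; exact map_pow φ b n
  have hroot : Polynomial.aeval (φ b) (minpoly ℚ β) = 0 := by
    rw [hminb']
    have := Polynomial.aeval_algHom_apply φ.toRatAlgHom b (minpoly ℚ b)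
    rw [minpoly.aeval, map_zero] at this
    exact this
  have hne' : φ b ≠ (β : ℂ) := by
    intro hEq
    apply hne
    rw [hz', hEq]; push_cast; ring
  have habs : ‖φ b‖ < β := hconj _ hroot hne'
  calc ‖z‖ = (‖φ b‖) ^ n := by rw [hz', norm_pow]
    _ < β ^ n := pow_lt_pow_left₀ habs (norm_nonneg _) hnz

/-- If some `H_n` (with `n ≥ 1`) is dense in `(1, ∞)`, then `H₁` is dense in `(1, ∞)`. -/
theorem H_one_dense_of_H_n_dense
    (h : ∃ n : ℕ, 1 ≤ n ∧ ∀ u v : ℝ, 1 < u → u < v →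
      ∃ β : ℝ, u < β ∧ β < v ∧ IsPerron β ∧ HasParryOrder β n) :
    ∀ u v : ℝ, 1 < u → u < v →
      ∃ β : ℝ, u < β ∧ β < v ∧ IsPerron β ∧ HasParryOrder β 1 := by
  intro u v hu huv
  obtain ⟨n, hn, hdense⟩ := h
  have hu0 : (0:ℝ) < u := lt_trans one_pos hu
  have hnR : (0:ℝ) < (n:ℝ) := by exact_mod_cast Nat.pos_of_ne_zero (by omega)
  set e : ℝ := 1 / n with he
  have he0 : 0 < e := by positivity
  have hue : 1 < u ^ e := (Real.one_lt_rpow_iff_of_pos hu0).mpr (Or.inl ⟨hu, he0⟩)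
  have huve : u ^ e < v ^ e := Real.rpow_lt_rpow hu0.le huv he0
  obtain ⟨γ, hγu, hγv, hγP, hγO⟩ := hdense (u ^ e) (v ^ e) hue huve
  have hγ0 : 0 < u ^ e := lt_trans one_pos hue
  have hun : (u ^ e) ^ n = u := by
    rw [← Real.rpow_natCast (u ^ e) n, ← Real.rpow_mul hu0.le, he]
    field_simp
    simp
  have hvn : (v ^ e) ^ n = v := by
    rw [← Real.rpow_natCast (v ^ e) n, ← Real.rpow_mul (le_trans hu0.le huv.le), he]
    field_simp
    simp
  refine ⟨γ ^ n, ?_, ?_, ?_, ?_⟩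
  · rw [← hun]
    exact pow_lt_pow_left₀ hγu hγ0.le (by omega)
  · rw [← hvn]
    exact pow_lt_pow_left₀ hγv (le_trans hγ0.le hγu.le) (by omega)
  · exact isPerron_pow hγP hn
  · constructor
    · intro _
      rw [pow_one]
      exact hγO.1 hn
    · intro k hk
      rw [← pow_mul]
      exact hγO.2 (n * k) (by nlinarith)
end

section
/- Let β be a totally real cubic Perron number whose Galois conjugates α and γ satisfy 1 < |α| ≤ |γ| < β. Then β^n is not a Parry number for any integer n ≥ 1, i.e. β has Parry order 0. -/
section Aux
open Polynomial IntermediateField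


/-- digit polynomial -/
noncomputable def dpoly (d : ℕ → ℤ) : ℕ → ℤ[X]
  | 0 => 1
  | n + 1 => X * dpoly d n - C (d n)

lemma dpoly_monic (d : ℕ → ℤ) : ∀ n, (dpoly d n).Monic ∧ (dpoly d n).natDegree = n := by
  intro n
  induction n with
  | zero => exact ⟨monic_one, natDegree_one⟩
  | succ n ih =>
    have hm : (X * dpoly d n).Monic := monic_X.mul ih.1
    have hd : (X * dpoly d n).natDegree = n + 1 := by
      rw [natDegree_mul X_ne_zero ih.1.ne_zero, natDegree_X, ih.2]; omega
    constructor
    · have hdd : (dpoly d (n+1)).natDegree = n + 1 := by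
        rw [dpoly, natDegree_sub_C, hd]
      rw [Monic, leadingCoeff, hdd, dpoly, coeff_sub, coeff_C,
        if_neg (by omega : ¬ (n+1 : ℕ) = 0), sub_zero, ← hd]
      exact hm
    · rw [dpoly, natDegree_sub_C, hd]

lemma dpoly_coeff_lt (d : ℕ → ℤ) : ∀ n k, k < n → (dpoly d n).coeff k = -d (n - 1 - k) := by
  intro n
  induction n with
  | zero => omega
  | succ n ih =>
    intro k hk
    cases k with
    | zero =>
      simp [dpoly, coeff_sub, coeff_C]
    | succ k =>
      rw [dpoly, coeff_sub, coeff_C, if_neg (by omega : ¬ (k+1 : ℕ) = 0), sub_zero,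
        coeff_X_mul, ih k (by omega), show n - 1 - k = n + 1 - 1 - (k + 1) by omega]

lemma dpoly_aeval (β : ℝ) (t : ℕ → ℝ) (d : ℕ → ℤ)
    (h0 : t 0 = 1) (hrec : ∀ n, t (n+1) = β * t n - d n) :
    ∀ n, aeval β (dpoly d n) = t n := by
  intro n
  induction n with
  | zero => simp [dpoly, h0]
  | succ n ih => simp [dpoly, ih, hrec n]

/-- Boyd's criterion: a real algebraic integer `β > 1` whose integral minimal polynomial
has constant term of absolute value `> β` is not a Parry number. -/
theorem boyd_criterion (β : ℝ) (hβ : 1 < β) (hint : IsIntegral ℤ β)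
    (hconst : β < |(((minpoly ℤ β).coeff 0 : ℤ) : ℝ)|) : ¬ IsParry β := by
  rintro ⟨-, hfin⟩
  have hβ0 : (0:ℝ) < β := by linarith
  set t : ℕ → ℝ := fun n => (betaT β)^[n] 1 with ht
  have ht0 : t 0 = 1 := rfl
  have htsucc : ∀ n, t (n+1) = betaT β (t n) := fun n => Function.iterate_succ_apply' _ n 1
  have htfract : ∀ n, t (n+1) = Int.fract (β * t n) := by
    intro n; rw [htsucc]; rfl
  have htnonneg : ∀ n, 0 ≤ t n := by
    intro n; cases n with
    | zero => norm_num [ht0]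
    | succ n => rw [htfract]; exact Int.fract_nonneg _
  have htle : ∀ n, t n ≤ 1 := by
    intro n; cases n with
    | zero => norm_num [ht0]
    | succ n => rw [htfract]; exact le_of_lt (Int.fract_lt_one _)
  have htlt : ∀ n, t (n+1) < 1 := by
    intro n; rw [htfract]; exact Int.fract_lt_one _
  -- digits
  set c : ℕ → ℤ := fun n => ⌊β * t n⌋ with hc
  have hrec : ∀ n, t (n+1) = β * t n - c n := by
    intro n; rw [htfract]; rfl
  have hc0 : ∀ n, 0 ≤ c n := by
    intro n; exact Int.floor_nonneg.2 (mul_nonneg hβ0.le (htnonneg n))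
  have hcβ : ∀ n, (c n : ℝ) ≤ β := by
    intro n
    calc (c n : ℝ) ≤ β * t n := Int.floor_le _
    _ ≤ β * 1 := by nlinarith [htle n, htnonneg n]
    _ = β := mul_one β
  -- pigeonhole
  have hmaps : Set.MapsTo (fun n : ℕ => t (n + 1)) Set.univ
      {x : ℝ | ∃ n : ℕ, 1 ≤ n ∧ (betaT β)^[n] 1 = x} := fun n _ => ⟨n + 1, by omega, rfl⟩
  obtain ⟨a, -, b, -, hab, heq⟩ :=
    Set.infinite_univ.exists_ne_map_eq_of_mapsTo hmaps hfin
  wlog hlt : a < b generalizing a b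
  · exact this b a (Ne.symm hab) heq.symm (by omega)
  set m := a + 1 with hm
  set p := b - a with hp
  have hm1 : 1 ≤ m := by omega
  have hp1 : 1 ≤ p := by omega
  have hper : t (m + p) = t m := by
    have hmb : m + p = b + 1 := by omega
    rw [hmb, ← heq]
  -- the Parry polynomial
  set P : ℤ[X] := dpoly c (m + p) - dpoly c m with hP
  have haevalP : aeval β P = 0 := by
    rw [hP, map_sub, dpoly_aeval β t c ht0 hrec, dpoly_aeval β t c ht0 hrec, hper, sub_self]
  have hPdeg : P.natDegree = m + p := by
    rw [hP, natDegree_sub_eq_left_of_natDegree_lt, (dpoly_monic c (m+p)).2]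
    rw [(dpoly_monic c (m+p)).2, (dpoly_monic c m).2]; omega
  have hPne : P ≠ 0 := by
    intro h
    rw [h, natDegree_zero] at hPdeg; omega
  -- coefficient facts
  have hcoeffm : P.coeff m = -c (p - 1) - 1 := by
    have h1 := (dpoly_monic c m).1
    have h2 := (dpoly_monic c m).2
    rw [Monic, leadingCoeff, h2] at h1
    rw [hP, coeff_sub, dpoly_coeff_lt c (m+p) m (by omega), h1,
      show m + p - 1 - m = p - 1 by omega]
  have hcoefflt : ∀ k, k < m → P.coeff k = -c (m + p - 1 - k) + c (m - 1 - k) := by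
    intro k hk
    rw [hP, coeff_sub, dpoly_coeff_lt c (m+p) k (by omega), dpoly_coeff_lt c m k hk]
    ring
  -- divisibility by the minimal polynomial
  have hMdvd : minpoly ℤ β ∣ P := minpoly.isIntegrallyClosed_dvd hint haevalP
  have hM0 : (minpoly ℤ β).coeff 0 ≠ 0 := by
    intro h
    rw [h] at hconst
    simp at hconst
    linarith
  obtain ⟨Q, hQ⟩ := hMdvd
  have hQne : Q ≠ 0 := by
    intro h; rw [h, mul_zero] at hQ; exact hPne hQ
  have hMtd : (minpoly ℤ β).natTrailingDegree = 0 :=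
    Nat.le_zero.1 (natTrailingDegree_le_of_ne_zero hM0)
  have htrail : P.trailingCoeff = (minpoly ℤ β).coeff 0 * Q.trailingCoeff := by
    rw [hQ, trailingCoeff_mul]
    congr 1
    rw [trailingCoeff, hMtd]
  have hQtne : Q.trailingCoeff ≠ 0 := mt trailingCoeff_eq_zero.1 hQne
  have habs : β < |((P.trailingCoeff : ℤ) : ℝ)| := by
    rw [htrail]
    push_cast [abs_mul]
    calc β < |(((minpoly ℤ β).coeff 0 : ℤ) : ℝ)| := hconst
    _ ≤ |(((minpoly ℤ β).coeff 0 : ℤ) : ℝ)| * |((Q.trailingCoeff : ℤ) : ℝ)| := by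
        have h1 : (1:ℝ) ≤ |((Q.trailingCoeff : ℤ) : ℝ)| := by
          rw [← Int.cast_abs]
          exact_mod_cast Int.one_le_abs (by exact_mod_cast hQtne)
        nlinarith [abs_nonneg (((minpoly ℤ β).coeff 0 : ℤ) : ℝ)]
  set k := P.natTrailingDegree with hk
  have htrailc : P.trailingCoeff = P.coeff k := rfl
  have hkm : k ≤ m := natTrailingDegree_le_of_ne_zero (p := P) (n := m)
    (by rw [hcoeffm]; have := hc0 (p-1); omega)
  rcases lt_or_eq_of_le hkm with hklt | hkeq
  · -- k < m : trailing coefficient is a difference of digits, too small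
    rw [htrailc, hcoefflt k hklt] at habs
    have h1 := hc0 (m + p - 1 - k); have h2 := hc0 (m - 1 - k)
    have h3 := hcβ (m + p - 1 - k); have h4 := hcβ (m - 1 - k)
    have h1' : (0:ℝ) ≤ c (m + p - 1 - k) := by exact_mod_cast h1
    have h2' : (0:ℝ) ≤ c (m - 1 - k) := by exact_mod_cast h2
    have hb : |((-c (m + p - 1 - k) + c (m - 1 - k) : ℤ) : ℝ)| ≤ β := by
      push_cast
      rw [abs_le]
      constructor <;> linarith
    linarith
  · -- k = m : digits are purely periodic, contradiction
    have hperiodic : ∀ j, c j = c (j + p) := by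
      intro j
      by_cases hj : j < m
      · have hzero : P.coeff (m - 1 - j) = 0 := by
          apply coeff_eq_zero_of_lt_natTrailingDegree
          omega
        rw [hcoefflt (m - 1 - j) (by omega),
          show m + p - 1 - (m - 1 - j) = j + p by omega,
          show m - 1 - (m - 1 - j) = j by omega] at hzero
        omega
      · have hstate : ∀ i, t (m + i) = t (m + p + i) := by
          intro i
          induction i with
          | zero => simpa using hper.symm
          | succ i ih =>
            rw [show m + (i+1) = (m+i) + 1 by ring, show m + p + (i+1) = (m+p+i) + 1 by ring,
              htsucc, htsucc, ih]
        have hj' : j = m + (j - m) := by omega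
        rw [hc]
        simp only
        rw [hj', show m + (j - m) + p = m + p + (j - m) by ring, hstate (j - m)]
    have hcper : ∀ i j, c (j + i * p) = c j := by
      intro i
      induction i with
      | zero => simp
      | succ i ih =>
        intro j
        rw [show j + (i+1) * p = (j + i * p) + p by ring, ← hperiodic (j + i*p), ih j]
    have hdig : ∀ n j, t (n * p + j + 1) = β * t (n * p + j) - c j := by
      intro n j
      rw [hrec (n * p + j), show n * p + j = j + n * p by ring, hcper n j]
    have hshift : ∀ n j, t ((n+1) * p + j) - t (n * p + j) = β ^ j * (t ((n+1)*p) - t (n*p)) := by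
      intro n j
      induction j with
      | zero => simp
      | succ j ih =>
        have e1 := hdig (n+1) j
        have e2 := hdig n j
        rw [show (n+1) * p + (j+1) = (n+1)*p + j + 1 by ring,
          show n*p + (j+1) = n*p + j + 1 by ring, e1, e2, pow_succ]
        linear_combination β * ih
    have hdrop : ∀ n, t ((n+1)*p) - t (n*p) = β ^ (n*p) * (t p - 1) := by
      intro n
      induction n with
      | zero => simp [ht0]
      | succ n ih =>
        have h := hshift n p
        rw [show (n+1)*p + p = (n+1+1)*p by ring, show n*p + p = (n+1)*p by ring] at h
        rw [h, ih, show (n+1)*p = n*p + p by ring, pow_add]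
        ring
    have hδ : t p - 1 < 0 := by
      have := htlt (p-1)
      rw [show p - 1 + 1 = p by omega] at this
      linarith
    have hdropN : ∀ n : ℕ, t (n*p) ≤ 1 - n * (1 - t p) := by
      intro n
      induction n with
      | zero => simp [ht0]
      | succ n ih =>
        have h := hdrop n
        have hpow : (1:ℝ) ≤ β ^ (n*p) := one_le_pow₀ hβ.le
        push_cast
        nlinarith
    obtain ⟨N, hN⟩ := exists_nat_gt (1 / (1 - t p))
    have hNb : (1:ℝ) < N * (1 - t p) := by
      rw [div_lt_iff₀ (by linarith)] at hN
      linarith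
    have h1 := hdropN N
    have h2 := htnonneg (N * p)
    linarith

/-- A monic real polynomial of degree at most 3 with three distinct roots factors. -/
lemma cubic_factor {p : ℝ[X]} (hm : p.Monic) (hdeg : p.natDegree ≤ 3)
    {a b c : ℝ} (hab : a ≠ b) (hac : a ≠ c) (hbc : b ≠ c)
    (ha : p.IsRoot a) (hb : p.IsRoot b) (hc : p.IsRoot c) :
    p = (X - C a) * (X - C b) * (X - C c) := by
  have cab : IsCoprime (X - C a : ℝ[X]) (X - C b) :=
    isCoprime_X_sub_C_of_isUnit_sub (sub_ne_zero.2 hab).isUnit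
  have cac : IsCoprime (X - C a : ℝ[X]) (X - C c) :=
    isCoprime_X_sub_C_of_isUnit_sub (sub_ne_zero.2 hac).isUnit
  have cbc : IsCoprime (X - C b : ℝ[X]) (X - C c) :=
    isCoprime_X_sub_C_of_isUnit_sub (sub_ne_zero.2 hbc).isUnit
  have h2 : (X - C a) * (X - C b) ∣ p :=
    cab.mul_dvd (dvd_iff_isRoot.2 ha) (dvd_iff_isRoot.2 hb)
  have h3 : (X - C a) * (X - C b) * (X - C c) ∣ p :=
    (cac.mul_left cbc).mul_dvd h2 (dvd_iff_isRoot.2 hc)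
  have hqm : ((X - C a) * (X - C b) * (X - C c)).Monic :=
    ((monic_X_sub_C a).mul (monic_X_sub_C b)).mul (monic_X_sub_C c)
  have hqd : ((X - C a) * (X - C b) * (X - C c)).natDegree = 3 := by
    rw [Monic.natDegree_mul ((monic_X_sub_C a).mul (monic_X_sub_C b)) (monic_X_sub_C c),
      Monic.natDegree_mul (monic_X_sub_C a) (monic_X_sub_C b),
      natDegree_X_sub_C, natDegree_X_sub_C, natDegree_X_sub_C]
  obtain ⟨u, hu⟩ := h3
  have hune : u ≠ 0 := by
    intro h; rw [h, mul_zero] at hu; exact hm.ne_zero hu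
  have hud : u.natDegree = 0 := by
    have := natDegree_mul (hqm.ne_zero) hune
    rw [← hu, hqd] at this
    omega
  have hum : u.Monic := hqm.of_mul_monic_left (hu ▸ hm)
  rw [hu, hum.natDegree_eq_zero.1 hud, mul_one]

lemma aeval_isRoot_map {K : ℚ[X]} {x : ℝ} (h : aeval x K = 0) :
    (K.map (algebraMap ℚ ℝ)).IsRoot x := by
  rwa [IsRoot, eval_map, ← aeval_def]

end Aux

open Polynomial IntermediateField in
/-- A totally real cubic Perron number whose conjugates satisfy
`1 < |α| ≤ |γ| < β` has no Parry positive power. -/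
theorem totally_real_cubic_case_four (β : ℝ) (hβ : IsPerron β)
    (hdeg : (minpoly ℚ β).natDegree = 3)
    (α γ : ℝ)
    (hαroot : Polynomial.aeval α (minpoly ℚ β) = 0)
    (hγroot : Polynomial.aeval γ (minpoly ℚ β) = 0)
    (hαγ : α ≠ γ)
    (h1 : 1 < |α|) (h2 : |α| ≤ |γ|) (h3 : |γ| < β) :
    ∀ n : ℕ, 1 ≤ n → ¬ IsParry (β ^ n) := by
  obtain ⟨hβ1, hβint, -⟩ := hβ
  have hβ0 : (0:ℝ) < β := by linarith
  have hαβ : α ≠ β := by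
    intro h
    rw [h, abs_of_pos hβ0] at h2
    linarith
  have hγβ : γ ≠ β := by
    intro h
    rw [h, abs_of_pos hβ0] at h3
    linarith
  have hQβ : IsIntegral ℚ β := hβint.tower_top
  have hMmonic : (minpoly ℚ β).Monic := minpoly.monic hQβ
  -- factorization of the minimal polynomial over ℝ
  have hMr : (minpoly ℚ β).map (algebraMap ℚ ℝ) = (X - C β) * (X - C α) * (X - C γ) := by
    apply cubic_factor (hMmonic.map _)
      (by rw [natDegree_map]; omega)
      (Ne.symm hαβ) (Ne.symm hγβ) hαγ
      (aeval_isRoot_map (minpoly.aeval ℚ β)) (aeval_isRoot_map hαroot) (aeval_isRoot_map hγroot)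
  -- coefficient 2 is rational, equal to -(β + α + γ)
  have hexp : ∀ x y z : ℝ, (X - C x) * (X - C y) * (X - C z)
      = X^3 - C (x + y + z) * X^2 + C (x*y + x*z + y*z) * X - C (x*y*z) := by
    intro x y z
    simp only [C_add, C_mul]
    ring
  have hcoeff2 : (algebraMap ℚ ℝ) ((minpoly ℚ β).coeff 2) = -(β + α + γ) := by
    rw [← coeff_map, hMr, hexp]
    simp [coeff_X_pow, add_mul, coeff_C_mul]
  -- main loop
  intro n hn
  have hn0 : n ≠ 0 := by omega
  have hintn : IsIntegral ℤ (β ^ n) := hβint.pow n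
  have hβn1 : (1:ℝ) < β ^ n := one_lt_pow₀ hβ1 hn0
  apply boyd_criterion _ hβn1 hintn
  -- the minimal polynomial of β^n over ℚ
  set Mn : ℚ[X] := minpoly ℚ (β ^ n) with hMn
  haveI := IntermediateField.adjoin.finiteDimensional hQβ
  have hmem : β ^ n ∈ ℚ⟮β⟯ := pow_mem (IntermediateField.mem_adjoin_simple_self ℚ β) n
  have hMn_eq : minpoly ℚ (⟨β ^ n, hmem⟩ : ℚ⟮β⟯) = Mn := by
    have h := minpoly.algebraMap_eq (A := ℚ) (B := ℚ⟮β⟯) (B' := ℝ)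
      (algebraMap ℚ⟮β⟯ ℝ).injective (⟨β ^ n, hmem⟩ : ℚ⟮β⟯)
    have he : (algebraMap ℚ⟮β⟯ ℝ) (⟨β ^ n, hmem⟩ : ℚ⟮β⟯) = β ^ n := rfl
    rw [he] at h
    exact h.symm
  have hMn_deg_le : Mn.natDegree ≤ 3 := by
    rw [← hMn_eq]
    calc (minpoly ℚ (⟨β ^ n, hmem⟩ : ℚ⟮β⟯)).natDegree
        ≤ Module.finrank ℚ ℚ⟮β⟯ := minpoly.natDegree_le _
      _ = 3 := by rw [IntermediateField.adjoin.finrank hQβ, hdeg]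
  -- β^n, α^n, γ^n are roots of Mn
  have hintQn : IsIntegral ℚ (β ^ n) := hQβ.pow n
  have hMnmonic : Mn.Monic := minpoly.monic hintQn
  have hcompdvd : minpoly ℚ β ∣ Mn.comp (X ^ n) := by
    apply minpoly.dvd
    rw [aeval_comp, map_pow, aeval_X]
    exact minpoly.aeval ℚ (β ^ n)
  obtain ⟨R, hR⟩ := hcompdvd
  have hrootsn : ∀ x : ℝ, aeval x (minpoly ℚ β) = 0 → aeval (x ^ n) Mn = 0 := by
    intro x hx
    have h : aeval x (Mn.comp (X ^ n)) = 0 := by rw [hR, map_mul, hx, zero_mul]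
    rwa [aeval_comp, map_pow, aeval_X] at h
  -- distinctness of the powers
  have habsβn : |β ^ n| = β ^ n := abs_of_pos (by positivity)
  have hαβn : α ^ n ≠ β ^ n := by
    intro h
    have h' : |α| ^ n < β ^ n := pow_lt_pow_left₀ (lt_of_le_of_lt h2 h3) (abs_nonneg _) hn0
    rw [← abs_pow, h, habsβn] at h'
    exact lt_irrefl _ h'
  have hγβn : γ ^ n ≠ β ^ n := by
    intro h
    have h' : |γ| ^ n < β ^ n := pow_lt_pow_left₀ h3 (abs_nonneg _) hn0
    rw [← abs_pow, h, habsβn] at h'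
    exact lt_irrefl _ h'
  have hαγn : α ^ n ≠ γ ^ n := by
    intro h
    have habs : |α| = |γ| := by
      rcases lt_or_eq_of_le h2 with hlt | he
      · have := pow_lt_pow_left₀ hlt (abs_nonneg α) hn0
        rw [← abs_pow, ← abs_pow, h] at this
        exact absurd this (lt_irrefl _)
      · exact he
    rcases abs_eq_abs.1 habs with h' | h'
    · exact hαγ h'
    · -- α = -γ makes β rational
      have hβrat : β = algebraMap ℚ ℝ (-(minpoly ℚ β).coeff 2) := by
        rw [map_neg, hcoeff2, h']
        ring
      have hX := minpoly.eq_X_sub_C ℝ (-(minpoly ℚ β).coeff 2)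
      rw [← hβrat] at hX
      rw [hX, natDegree_X_sub_C] at hdeg
      omega
  -- the factorization of Mn over ℝ
  have hMnr : Mn.map (algebraMap ℚ ℝ)
      = (X - C (β ^ n)) * (X - C (α ^ n)) * (X - C (γ ^ n)) := by
    apply cubic_factor (hMnmonic.map _) (by rw [natDegree_map]; exact hMn_deg_le)
      (Ne.symm hαβn) (Ne.symm hγβn) hαγn
      (aeval_isRoot_map (minpoly.aeval ℚ (β ^ n)))
      (aeval_isRoot_map (hrootsn α hαroot)) (aeval_isRoot_map (hrootsn γ hγroot))
  -- constant coefficient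
  have hcoeff0 : (algebraMap ℚ ℝ) (Mn.coeff 0) = -(β ^ n * α ^ n * γ ^ n) := by
    rw [← coeff_map, hMnr, coeff_zero_eq_eval_zero]
    simp
  -- relate the ℤ-minimal polynomial
  have hZQ : Mn = (minpoly ℤ (β ^ n)).map (algebraMap ℤ ℚ) :=
    minpoly.isIntegrallyClosed_eq_field_fractions ℚ ℝ hintn
  have hcoeffZ : ((((minpoly ℤ (β ^ n)).coeff 0 : ℤ)) : ℝ) = -(β ^ n * α ^ n * γ ^ n) := by
    have h : Mn.coeff 0 = (((minpoly ℤ (β ^ n)).coeff 0 : ℤ) : ℚ) := by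
      rw [hZQ, coeff_map]
      simp
    rw [← hcoeff0, h]
    push_cast
    norm_num
  -- final inequality
  rw [hcoeffZ, abs_neg, abs_mul, abs_mul, habsβn, abs_pow, abs_pow]
  have hα1 : (1:ℝ) < |α| ^ n := one_lt_pow₀ h1 hn0
  have hγ1 : (1:ℝ) < |γ| ^ n := one_lt_pow₀ (lt_of_lt_of_le h1 h2) hn0
  have hb0 : (0:ℝ) < β ^ n := by positivity
  rw [mul_assoc]
  nth_rewrite 1 [← mul_one (β ^ n)]
  apply mul_lt_mul_of_pos_left _ hb0
  nlinarith
end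

section
/- Let β be a totally real cubic Perron number that is not a Pisot number. If β^m is a Parry number for some integer m ≥ 1, then m is odd. Consequently, the Parry order of β is either 0 or an odd number. -/
open Polynomial Finset

private lemma parry_root_unique (α : ℝ) (h : IsParry α) :
    ∃ Q : ℚ[X], aeval α Q = 0 ∧ ∀ t : ℝ, 1 < t → aeval t Q = 0 → t = α := by
  obtain ⟨hα, hfin⟩ := h
  set x : ℕ → ℝ := fun n => (betaT α)^[n] 1 with hxdef
  have hx_succ : ∀ n, x (n+1) = betaT α (x n) := fun n =>
    Function.iterate_succ_apply' _ _ _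
  have hx0 : x 0 = 1 := rfl
  have hαpos : (0:ℝ) < α := lt_trans zero_lt_one hα
  have hbf : ∀ y : ℝ, betaT α y = Int.fract (α*y) := fun y => rfl
  have hxnn : ∀ n, 0 ≤ x n := by
    intro n
    cases n with
    | zero => rw [hx0]; norm_num
    | succ n => rw [hx_succ, hbf]; exact Int.fract_nonneg _
  have hxle : ∀ n, x n ≤ 1 := by
    intro n
    cases n with
    | zero => rw [hx0]
    | succ n => rw [hx_succ, hbf]; exact (Int.fract_lt_one _).le
  set d : ℕ → ℤ := fun n => ⌊α * x n⌋ with hddef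
  have hdnn : ∀ n, (0:ℝ) ≤ (d n : ℝ) := by
    intro n
    have : (0:ℤ) ≤ d n := Int.floor_nonneg.mpr (mul_nonneg hαpos.le (hxnn n))
    exact_mod_cast this
  have hdle : ∀ n, (d n : ℝ) ≤ α := by
    intro n
    refine le_trans (Int.floor_le _) ?_
    nlinarith [hxle n, hxnn n]
  have hd0 : (1:ℝ) ≤ (d 0 : ℝ) := by
    have : (1:ℤ) ≤ d 0 := Int.le_floor.mpr (by rw [hx0]; simpa using hα.le)
    exact_mod_cast this
  have hrec : ∀ n, x (n+1) = α * x n - (d n : ℝ) := by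
    intro n; rw [hx_succ]; rfl
  -- closed form
  have hclosed : ∀ N, x N = α^N - ∑ k ∈ range N, (d k : ℝ) * α^(N-1-k) := by
    intro N
    induction N with
    | zero => simp [hx0]
    | succ N ih =>
      rw [hrec, ih, Finset.sum_range_succ, mul_sub, Finset.mul_sum]
      have h1 : α * α ^ N = α ^ (N+1) := (pow_succ α N).symm ▸ (mul_comm _ _)
      have h2 : ∀ k ∈ range N, α * ((d k:ℝ) * α^(N-1-k)) = (d k:ℝ) * α^(N+1-1-k) := by
        intro k hk
        have hk' := Finset.mem_range.mp hk
        have : α ^ (N-1-k) * α = α ^ (N+1-1-k) := by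
          rw [← pow_succ]; congr 1; omega
        rw [← this]; ring
      rw [Finset.sum_congr rfl h2]
      have h3 : (N+1-1-N) = 0 := by omega
      rw [h3]
      push_cast
      ring_nf
  -- periodicity
  have hex : ∃ a b : ℕ, a < b ∧ x (a+1) = x (b+1) := by
    haveI : Finite {y : ℝ | ∃ n : ℕ, 1 ≤ n ∧ (betaT α)^[n] 1 = y} := hfin
    obtain ⟨a, b, hne, heq⟩ := Finite.exists_ne_map_eq_of_infinite
      (fun n : ℕ => (⟨x (n+1), n+1, by omega, rfl⟩ :
        {y : ℝ | ∃ n : ℕ, 1 ≤ n ∧ (betaT α)^[n] 1 = y}))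
    have heq' : x (a+1) = x (b+1) := by simpa using congrArg Subtype.val heq
    rcases hne.lt_or_gt with h | h
    · exact ⟨a, b, h, heq'⟩
    · exact ⟨b, a, h, heq'.symm⟩
  obtain ⟨a, b, hab, hxab⟩ := hex
  clear_value x d
  set p := a + 1 with hpdef
  set q := b - a with hqdef
  have hq1 : 1 ≤ q := by omega
  have hp1 : 1 ≤ p := by omega
  have hpq : p + q = b + 1 := by omega
  have hper : ∀ n, p ≤ n → x (n + q) = x n := by
    intro n hn
    induction n, hn using Nat.le_induction with
    | base => rw [hpq]; exact hxab.symm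
    | succ n hn ih =>
      have h1 : n + 1 + q = (n + q) + 1 := by omega
      rw [h1, hx_succ, hx_succ, ih]
  have hdper : ∀ n, p ≤ n → (d (n + q) : ℝ) = (d n : ℝ) := by
    intro n hn
    simp only [hddef, hper n hn]
  -- the polynomial
  set Q : ℚ[X] := (X:ℚ[X])^(p+q) - ∑ k ∈ range (p+q), C ((d k : ℚ)) * X^(p+q-1-k)
    - ((X:ℚ[X])^p - ∑ k ∈ range p, C ((d k:ℚ)) * X^(p-1-k)) with hQdef
  have haev : ∀ t : ℝ, aeval t Q =
      (t^(p+q) - ∑ k ∈ range (p+q), (d k : ℝ) * t^(p+q-1-k))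
      - (t^p - ∑ k ∈ range p, (d k:ℝ) * t^(p-1-k)) := by
    intro t
    simp [hQdef, map_sub, map_sum, map_mul, map_pow, aeval_X, aeval_C]
  refine ⟨Q, ?_, ?_⟩
  · rw [haev, ← hclosed, ← hclosed, hper p le_rfl, sub_self]
  intro t ht htQ
  by_contra hne
  have htpos : (0:ℝ) < t := lt_trans zero_lt_one ht
  have htne : t ≠ 0 := htpos.ne'
  have hti1 : t⁻¹ < 1 := inv_lt_one_of_one_lt₀ ht
  have htipos : (0:ℝ) < t⁻¹ := inv_pos.mpr htpos
  have hai1 : α⁻¹ < 1 := inv_lt_one_of_one_lt₀ hα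
  have haipos : (0:ℝ) < α⁻¹ := inv_pos.mpr hαpos
  -- generic identity
  have hkey : ∀ (s : ℝ), s ≠ 0 → ∀ N,
      s^N * (1 - ∑ k ∈ range N, (d k:ℝ) * (s⁻¹)^(k+1))
        = s^N - ∑ k ∈ range N, (d k:ℝ) * s^(N-1-k) := by
    intro s hs N
    rw [mul_sub, mul_one, Finset.mul_sum]
    congr 1
    refine Finset.sum_congr rfl ?_
    intro k hk
    have hk' := Finset.mem_range.mp hk
    have h1 : s^(N-1-k) * s^(k+1) = s^N := by
      rw [← pow_add]; congr 1; omega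
    have h2 : s^N * (s⁻¹)^(k+1) = s^(N-1-k) := by
      rw [inv_pow, ← h1, mul_assoc, mul_inv_cancel₀ (pow_ne_zero _ hs), mul_one]
    rw [mul_comm ((d k:ℝ)) _, ← mul_assoc, h2, mul_comm]
  set U : ℕ → ℝ := fun N => 1 - ∑ k ∈ range N, (d k:ℝ) * (t⁻¹)^(k+1) with hUdef
  set A : ℕ → ℝ := fun N => 1 - ∑ k ∈ range N, (d k:ℝ) * (α⁻¹)^(k+1) with hAdef
  clear_value U A
  have hAx : ∀ N, α^N * A N = x N := by
    intro N; rw [hAdef]; rw [hkey α hαpos.ne' N, ← hclosed]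
  have hAnn : ∀ N, 0 ≤ A N := by
    intro N
    have h := hAx N
    have hpow : (0:ℝ) < α^N := pow_pos hαpos N
    nlinarith [hxnn N]
  have hAle : ∀ N, A N ≤ (α⁻¹)^N := by
    intro N
    have h := hAx N
    have hpow : (0:ℝ) < α^N := pow_pos hαpos N
    have h2 : α^N * (α⁻¹)^N = 1 := by
      rw [inv_pow, mul_inv_cancel₀ (pow_ne_zero _ hαpos.ne')]
    rw [← mul_le_mul_iff_right₀ hpow, h, h2]
    exact hxle N
  -- from the polynomial equation
  have hUpq : U (p+q) = (t⁻¹)^q * U p := by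
    have h0 : t^(p+q) * U (p+q) = t^p * U p := by
      rw [hUdef]
      rw [hkey t htne (p+q), hkey t htne p]
      have := haev t
      rw [htQ] at this
      linarith [this]
    rw [pow_add] at h0
    have hqne : t^q ≠ 0 := pow_ne_zero _ htne
    have hpne : t^p ≠ 0 := pow_ne_zero _ htne
    have h0' : t^q * U (p+q) = U p := by
      apply mul_left_cancel₀ hpne; rw [← h0]; ring
    rw [← h0', inv_pow, ← mul_assoc, inv_mul_cancel₀ hqne, one_mul]
  have hUstep : ∀ N, U (N+1) = U N - (d N : ℝ) * (t⁻¹)^(N+1) := by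
    intro N; simp only [hUdef, Finset.sum_range_succ]; ring
  have hshift : ∀ n, p ≤ n → U (n+q) = (t⁻¹)^q * U n := by
    intro n hn
    induction n, hn using Nat.le_induction with
    | base => exact hUpq
    | succ n hn ih =>
      have h1 : n + 1 + q = (n + q) + 1 := by omega
      rw [h1, hUstep, ih, hUstep, hdper n hn]
      have h2 : (t⁻¹)^(n+q+1) = (t⁻¹)^(n+1) * (t⁻¹)^q := by
        rw [← pow_add]; congr 1; omega
      rw [h2]; ring
  have hUk : ∀ k : ℕ, U (p + k*q) = ((t⁻¹)^q)^k * U p := by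
    intro k
    induction k with
    | zero => simp
    | succ k ih =>
      have h1 : p + (k+1)*q = (p + k*q) + q := by ring
      rw [h1, hshift (p + k*q) (by omega), ih, pow_succ]
      ring
  -- difference of the two series
  have hdiff : ∀ N, U N - A N =
      ∑ k ∈ range N, (d k:ℝ) * ((α⁻¹)^(k+1) - (t⁻¹)^(k+1)) := by
    intro N
    have h1 : U N - A N = (∑ k ∈ range N, (d k:ℝ)*(α⁻¹)^(k+1))
        - ∑ k ∈ range N, (d k:ℝ)*(t⁻¹)^(k+1) := by
      simp only [hUdef, hAdef]; ring
    rw [h1, ← Finset.sum_sub_distrib]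
    exact Finset.sum_congr rfl fun k _ => by ring
  set s : ℝ := (t⁻¹)^q with hsdef
  have hspos : 0 < s := pow_pos htipos q
  have hs1 : s < 1 := pow_lt_one₀ htipos.le hti1 (by omega)
  clear_value s
  have h0mem : ∀ N : ℕ, 1 ≤ N → 0 ∈ range N := fun N hN => Finset.mem_range.mpr (by omega)
  rcases (Ne.lt_or_gt hne) with hlt | hgt
  · -- case t < α
    have htiai : α⁻¹ < t⁻¹ := inv_strictAnti₀ htpos hlt
    have hδ : 0 < t⁻¹ - α⁻¹ := by linarith
    have hUle : ∀ N, 1 ≤ N → U N ≤ A N - (t⁻¹ - α⁻¹) := by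
      intro N hN
      have hterm : ∀ k ∈ range N, 0 ≤ -((d k:ℝ) * ((α⁻¹)^(k+1) - (t⁻¹)^(k+1))) := by
        intro k _
        have hp1 : (α⁻¹)^(k+1) ≤ (t⁻¹)^(k+1) := pow_le_pow_left₀ haipos.le htiai.le _
        have := mul_nonneg (hdnn k) (sub_nonneg.mpr hp1)
        linarith
      have hsum := Finset.single_le_sum hterm (h0mem N hN)
      rw [Finset.sum_neg_distrib] at hsum
      have h0 : t⁻¹ - α⁻¹ ≤ -((d 0:ℝ) * ((α⁻¹)^(0+1) - (t⁻¹)^(0+1))) := by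
        have := le_mul_of_one_le_left hδ.le hd0
        simp only [zero_add, pow_one]
        linarith
      have hd := hdiff N
      linarith
    have hUleN : ∀ N, 1 ≤ N → U N ≤ (α⁻¹)^N - (t⁻¹ - α⁻¹) := fun N hN => by
      linarith [hUle N hN, hAle N]
    obtain ⟨k1, hk1⟩ := exists_pow_lt_of_lt_one
      (show (0:ℝ) < (t⁻¹ - α⁻¹)/(2*(|U p|+1)) by positivity) hs1
    obtain ⟨k2, hk2⟩ := exists_pow_lt_of_lt_one
      (show (0:ℝ) < (t⁻¹ - α⁻¹)/2 by linarith) hai1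
    set k := k1 + k2 with hkdef
    clear_value k
    have hskk : s^k ≤ s^k1 := pow_le_pow_of_le_one hspos.le hs1.le (by omega)
    have hUp1 : (0:ℝ) < |U p| + 1 := by positivity
    have habs : |U (p + k*q)| < (t⁻¹ - α⁻¹)/2 := by
      rw [hUk k, abs_mul, abs_pow, abs_of_pos hspos]
      have h1 : s^k * |U p| ≤ s^k1 * (|U p| + 1) :=
        mul_le_mul hskk (by linarith) (abs_nonneg _) (pow_nonneg hspos.le _)
      have h2 : s^k1 * (|U p| + 1) < ((t⁻¹ - α⁻¹)/(2*(|U p|+1))) * (|U p| + 1) :=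
        mul_lt_mul_of_pos_right hk1 hUp1
      have h3 : ((t⁻¹ - α⁻¹)/(2*(|U p|+1))) * (|U p| + 1) = (t⁻¹ - α⁻¹)/2 := by
        field_simp
      linarith
    have hkq : k ≤ k * q := Nat.le_mul_of_pos_right k (by omega)
    have hai2 : (α⁻¹)^(p + k*q) ≤ (α⁻¹)^k2 :=
      pow_le_pow_of_le_one haipos.le hai1.le
        (le_trans (by omega : k2 ≤ k) (le_trans hkq (Nat.le_add_left _ _)))
    have hup : U (p + k*q) ≤ (t⁻¹ - α⁻¹)/2 - (t⁻¹ - α⁻¹) := by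
      have := hUleN (p + k*q) (by omega)
      linarith
    have hna := (abs_lt.mp habs).1
    linarith
  · -- case α < t
    have htiai : t⁻¹ < α⁻¹ := inv_strictAnti₀ hαpos hgt
    have hδ : 0 < α⁻¹ - t⁻¹ := by linarith
    have hUge : ∀ N, 1 ≤ N → α⁻¹ - t⁻¹ ≤ U N := by
      intro N hN
      have hterm : ∀ k ∈ range N, 0 ≤ (d k:ℝ) * ((α⁻¹)^(k+1) - (t⁻¹)^(k+1)) := by
        intro k _
        have hp1 : (t⁻¹)^(k+1) ≤ (α⁻¹)^(k+1) := pow_le_pow_left₀ htipos.le htiai.le _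
        exact mul_nonneg (hdnn k) (sub_nonneg.mpr hp1)
      have hsum := Finset.single_le_sum hterm (h0mem N hN)
      have h0 : α⁻¹ - t⁻¹ ≤ (d 0:ℝ) * ((α⁻¹)^(0+1) - (t⁻¹)^(0+1)) := by
        have := le_mul_of_one_le_left hδ.le hd0
        simp only [zero_add, pow_one]
        linarith
      have hS := le_trans h0 hsum
      rw [← hdiff N] at hS
      linarith [hAnn N]
    have hUp : 0 < U p := lt_of_lt_of_le hδ (hUge p hp1)
    obtain ⟨k, hk⟩ := exists_pow_lt_of_lt_one (div_pos hδ hUp) hs1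
    have hlt2 : U (p + k*q) < α⁻¹ - t⁻¹ := by
      rw [hUk k]
      calc s^k * U p < ((α⁻¹ - t⁻¹)/U p) * U p := mul_lt_mul_of_pos_right hk hUp
        _ = α⁻¹ - t⁻¹ := div_mul_cancel₀ _ hUp.ne'
    linarith [hUge (p + k*q) (by omega)]


/-- For a totally real cubic non-Pisot Perron number, every Parry power has odd
exponent; consequently its Parry order is `0` or odd. -/
theorem totally_real_cubic_parry_order_odd (β : ℝ) (hβ : IsPerron β)
    (hdeg : (minpoly ℚ β).natDegree = 3)
    (hreal : ∀ z : ℂ, Polynomial.aeval z (minpoly ℚ β) = 0 → z.im = 0)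
    (hnp : ¬ IsPisot β) :
    (∀ m : ℕ, 1 ≤ m → IsParry (β ^ m) → Odd m) ∧
    (∀ n : ℕ, HasParryOrder β n → n = 0 ∨ Odd n) := by
  have part1 : ∀ m : ℕ, 1 ≤ m → IsParry (β ^ m) → Odd m := by
    have hβ1 := hβ.1
    have hint := hβ.2.1
    have hQint : IsIntegral ℚ β := hint.tower_top
    intro m hm hparry
    by_contra hodd
    have hmeven : Even m := Nat.not_odd_iff_even.mp hodd
    obtain ⟨z, hz0, hzne, hz1⟩ : ∃ z : ℂ, aeval z (minpoly ℚ β) = 0 ∧ z ≠ (β:ℂ) ∧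
        1 ≤ ‖z‖ := by
      by_contra hcon
      push_neg at hcon
      exact hnp ⟨hβ1, hint, fun z h1 h2 => hcon z h1 h2⟩
    have hzim := hreal z hz0
    set γ : ℝ := z.re with hγdef
    have hzγ : z = (γ:ℂ) := by
      apply Complex.ext <;> simp [hγdef, hzim]
    have habs : ‖z‖ = |γ| := by rw [hzγ]; exact (Complex.norm_real γ).trans (Real.norm_eq_abs γ)
    have hγ1 : 1 ≤ |γ| := habs ▸ hz1
    have hγβ : |γ| < β := by
      have := hβ.2.2 z hz0 hzne
      rwa [habs] at this
    have hroot : aeval γ (minpoly ℚ β) = 0 := by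
      have h1 : ((aeval γ (minpoly ℚ β) : ℝ) : ℂ) = 0 := by
        have h2 := Polynomial.aeval_algebraMap_apply ℂ γ (minpoly ℚ β)
        simp only [Complex.coe_algebraMap] at h2
        rw [← h2, ← hzγ, hz0]
      exact_mod_cast h1
    -- γ is not ±1
    have hnorat : ∀ c : ℚ, γ ≠ (c : ℝ) := by
      intro c hc
      have h1 : aeval ((c:ℝ)) (minpoly ℚ β) = 0 := hc ▸ hroot
      have h2 : (minpoly ℚ β).eval c = 0 := by
        have h3 := Polynomial.aeval_algebraMap_apply ℝ c (minpoly ℚ β)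
        rw [show (algebraMap ℚ ℝ) c = (c:ℝ) from rfl] at h3
        rw [h1] at h3
        have h5 : (aeval c) (minpoly ℚ β) = eval c (minpoly ℚ β) := by
          rw [Polynomial.coe_aeval_eq_eval]
        rw [h5] at h3
        have h4 : (((minpoly ℚ β).eval c : ℚ) : ℝ) = 0 := by
          rw [← eq_ratCast (algebraMap ℚ ℝ), ← h3]
        exact_mod_cast h4
      have hdvd : X - C c ∣ minpoly ℚ β := Polynomial.dvd_iff_isRoot.mpr h2
      have hirr := minpoly.irreducible hQint
      obtain ⟨h, hh⟩ := hdvd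
      rcases hirr.isUnit_or_isUnit hh with hu | hu
      · exact Polynomial.not_isUnit_X_sub_C c hu
      · have hne : (X - C c : ℚ[X]) ≠ 0 := Polynomial.X_sub_C_ne_zero c
        have hne2 : h ≠ 0 := fun h0 => by
          rw [h0, mul_zero] at hh
          exact (minpoly.ne_zero hQint) hh
        have : (minpoly ℚ β).natDegree = 1 := by
          rw [hh, Polynomial.natDegree_mul hne hne2, Polynomial.natDegree_X_sub_C,
            Polynomial.natDegree_eq_zero_of_isUnit hu]
        omega
    have hγgt : 1 < |γ| := by
      rcases lt_or_eq_of_le hγ1 with h | h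
      · exact h
      · exfalso
        rcases abs_eq (by norm_num : (0:ℝ) ≤ 1) |>.mp h.symm with h1 | h1
        · exact hnorat 1 (by exact_mod_cast h1)
        · exact hnorat (-1) (by push_cast; exact h1)
    obtain ⟨Q, hQα, hQuniq⟩ := parry_root_unique (β^m) hparry
    have hβm : aeval β (Q.comp ((X:ℚ[X])^m)) = 0 := by
      rw [Polynomial.aeval_comp]
      simpa using hQα
    have hdvd : minpoly ℚ β ∣ Q.comp ((X:ℚ[X])^m) := minpoly.dvd ℚ β hβm
    obtain ⟨R, hR⟩ := hdvd
    have hγQ : aeval (γ^m) Q = 0 := by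
      have h1 : aeval γ (Q.comp ((X:ℚ[X])^m)) = 0 := by
        rw [hR, map_mul, hroot, zero_mul]
      rwa [Polynomial.aeval_comp, map_pow, Polynomial.aeval_X] at h1
    have hpowabs : |γ|^m = γ^m := hmeven.pow_abs γ
    have hgm1 : 1 < γ^m := by
      rw [← hpowabs]
      exact one_lt_pow₀ hγgt (by omega)
    have heq := hQuniq (γ^m) hgm1 hγQ
    have hlt : γ^m < β^m := by
      rw [← hpowabs]
      exact pow_lt_pow_left₀ hγβ (abs_nonneg γ) (by omega)
    rw [heq] at hlt
    exact lt_irrefl _ hlt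

  refine ⟨part1, fun n hpo => ?_⟩
  rcases Nat.eq_zero_or_pos n with h0 | h1
  · exact Or.inl h0
  · exact Or.inr (part1 n h1 (hpo.1 h1))
end

section
/- Let a, b, c be real numbers and let β > 1 be a real number satisfying β³ = a·β² + b·β − c. Then 1 = a/β + Σ_{i=1}^∞ ((b − 1)/β^{2i} + (a − c)/β^{2i+1}), where the series converges. -/
/-- If `β > 1` satisfies `β³ = a·β² + b·β - c`, then
`1 = a/β + Σ_{i=1}^∞ ((b-1)/β^{2i} + (a-c)/β^{2i+1})`, the series converging. -/
theorem cubic_expansion_of_one (a b c β : ℝ) (hβ : 1 < β)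
    (hroot : β ^ 3 = a * β ^ 2 + b * β - c) :
    HasSum (fun i : ℕ => (b - 1) / β ^ (2 * (i + 1)) + (a - c) / β ^ (2 * (i + 1) + 1))
      (1 - a / β) := by
  have hβ0 : (0:ℝ) < β := one_pos.trans hβ
  have hβ2 : 1 < β ^ 2 := by nlinarith
  have hr0 : (0:ℝ) ≤ (β ^ 2)⁻¹ := by positivity
  have hr1 : (β ^ 2)⁻¹ < 1 := inv_lt_one_of_one_lt₀ hβ2
  have h := (hasSum_geometric_of_lt_one hr0 hr1).mul_left ((b - 1) / β ^ 2 + (a - c) / β ^ 3)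
  have key : ((b - 1) / β ^ 2 + (a - c) / β ^ 3) * (1 - (β ^ 2)⁻¹)⁻¹ = 1 - a / β := by
    have h1 : 1 - (β ^ 2)⁻¹ = (β ^ 2 - 1) / β ^ 2 := by field_simp
    have h2 : β ^ 2 - 1 ≠ 0 := by nlinarith
    rw [h1]
    field_simp
    linear_combination (-1) * hroot
  rw [key] at h
  refine h.congr_fun fun i => ?_
  have e1 : β ^ (2 * (i + 1)) = (β ^ 2) ^ (i + 1) := by rw [pow_mul]
  have e2 : β ^ (2 * (i + 1) + 1) = (β ^ 2) ^ (i + 1) * β := by rw [pow_succ, pow_mul]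
  rw [e1, e2, pow_succ]
  have hp : (β ^ 2) ^ i ≠ 0 := by positivity
  field_simp
  have hq : β ^ (i * 2) * β⁻¹ ^ (i * 2) = 1 := by rw [← mul_pow, mul_inv_cancel₀ hβ0.ne', one_pow]
  linear_combination (-(b * β - β + a - c)) * hq
end
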